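/- arXiv:2508.14236 — 5 statements merged into one kernel-verified Lean document; each statement's English description precedes it below -/
import Mathlib

section
/- Let ψ : [0,T] × [0,1] → ℝ be such that ∂_t ψ, ∂_s ψ, and ∂_t∂_s ψ exist everywhere (with one-sided derivatives at boundary points), and suppose ∂_t∂_s ψ is continuous at a point (t₀, 0) with t₀ ∈ [0,T]. Then ∂_s∂_t ψ(t₀, 0) exists and equals ∂_t∂_s ψ(t₀, 0). -/
open Set

/-- boundary-point Schwarz theorem: let `ψ : [0,T] × [0,1] → ℝ`
be such that `∂_t ψ`, `∂_s ψ` and `∂_t ∂_s ψ` exist everywhere (one-sided at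
boundary points, encoded via `derivWithin` on the intervals), and suppose
`∂_t ∂_s ψ` is jointly continuous at a point `(t₀, 0)` with `t₀ ∈ [0,T]`.
Then `∂_s ∂_t ψ (t₀, 0)` exists and equals `∂_t ∂_s ψ (t₀, 0)`. -/
theorem boundary_schwarz (T : ℝ) (hT : 0 < T) (ψ : ℝ → ℝ → ℝ) (t₀ : ℝ)
    (ht₀ : t₀ ∈ Icc (0 : ℝ) T)
    -- existence of ∂_t ψ
    (hdt : ∀ t ∈ Icc (0 : ℝ) T, ∀ s ∈ Icc (0 : ℝ) 1,
      DifferentiableWithinAt ℝ (fun t' => ψ t' s) (Icc 0 T) t)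
    -- existence of ∂_s ψ
    (hds : ∀ t ∈ Icc (0 : ℝ) T, ∀ s ∈ Icc (0 : ℝ) 1,
      DifferentiableWithinAt ℝ (fun s' => ψ t s') (Icc 0 1) s)
    -- existence of ∂_t ∂_s ψ
    (hdts : ∀ t ∈ Icc (0 : ℝ) T, ∀ s ∈ Icc (0 : ℝ) 1,
      DifferentiableWithinAt ℝ
        (fun t' => derivWithin (fun s' => ψ t' s') (Icc 0 1) s) (Icc 0 T) t)
    -- continuity of ∂_t ∂_s ψ at (t₀, 0)
    (hcont : ContinuousWithinAt
      (fun p : ℝ × ℝ =>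
        derivWithin (fun t' => derivWithin (fun s' => ψ t' s') (Icc 0 1) p.2)
          (Icc 0 T) p.1)
      (Icc (0 : ℝ) T ×ˢ Icc (0 : ℝ) 1) (t₀, 0)) :
    HasDerivWithinAt (fun s => derivWithin (fun t' => ψ t' s) (Icc (0 : ℝ) T) t₀)
      (derivWithin (fun t' => derivWithin (fun s' => ψ t' s') (Icc (0 : ℝ) 1) 0)
        (Icc (0 : ℝ) T) t₀)
      (Icc (0 : ℝ) 1) 0 := by
  obtain ⟨ht₀0, ht₀T⟩ := ht₀
  have ht₀mem : t₀ ∈ Icc (0 : ℝ) T := ⟨ht₀0, ht₀T⟩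
  have h01 : (0 : ℝ) ∈ Icc (0 : ℝ) 1 := ⟨le_refl _, zero_le_one⟩
  set L : ℝ := derivWithin (fun t' => derivWithin (fun s' => ψ t' s') (Icc (0 : ℝ) 1) 0)
      (Icc (0 : ℝ) T) t₀ with hLdef
  -- the t-filter is nontrivial
  have hnebot : (nhdsWithin t₀ (Icc (0 : ℝ) T \ {t₀})).NeBot := by
    rcases lt_or_eq_of_le ht₀T with h | h
    · have hcl : t₀ ∈ closure (Ioo t₀ T) := by
        rw [closure_Ioo h.ne]; exact ⟨le_refl _, h.le⟩
      have hne := mem_closure_iff_nhdsWithin_neBot.1 hcl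
      exact hne.mono (nhdsWithin_mono _ (fun x hx =>
        ⟨⟨ht₀0.trans hx.1.le, hx.2.le⟩, by simp [(ne_of_gt hx.1)]⟩))
    · have hcl : t₀ ∈ closure (Ioo 0 T) := by
        rw [closure_Ioo hT.ne]; exact ⟨ht₀0, ht₀T⟩
      have hne := mem_closure_iff_nhdsWithin_neBot.1 hcl
      exact hne.mono (nhdsWithin_mono _ (fun x hx =>
        ⟨⟨hx.1.le, hx.2.le⟩, by simp [h, ne_of_lt hx.2]⟩))
  rw [hasDerivWithinAt_iff_tendsto_slope, Metric.tendsto_nhdsWithin_nhds]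
  intro ε hε
  rw [Metric.continuousWithinAt_iff] at hcont
  obtain ⟨δ, hδ, hδε⟩ := hcont (ε / 2) (by linarith)
  refine ⟨min δ 1, lt_min hδ one_pos, ?_⟩
  intro s hsmem hsd
  obtain ⟨⟨hs0, hs1⟩, hsne⟩ := hsmem
  have hspos : 0 < s := lt_of_le_of_ne hs0 (Ne.symm (by simpa using hsne))
  have hsδ : s < δ := by
    rw [Real.dist_eq, sub_zero, abs_of_pos hspos] at hsd
    exact lt_of_lt_of_le hsd (min_le_left _ _)
  -- Step 1: the key double-difference estimate
  have claim1 : ∀ t ∈ Icc (0 : ℝ) T, |t - t₀| < δ →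
      |(ψ t s - ψ t 0) - (ψ t₀ s - ψ t₀ 0) - L * s * (t - t₀)| ≤ ε / 2 * s * |t - t₀| := by
    intro t htmem htδ
    have hsub : uIcc t₀ t ⊆ Icc (0 : ℝ) T := uIcc_subset_Icc ht₀mem htmem
    -- inner MVT in the t-variable
    have inner : ∀ σ ∈ Icc (0 : ℝ) s,
        |(derivWithin (fun s' => ψ t s') (Icc (0 : ℝ) 1) σ -
          derivWithin (fun s' => ψ t₀ s') (Icc (0 : ℝ) 1) σ) - L * (t - t₀)| ≤
          ε / 2 * |t - t₀| := by
      intro σ hσ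
      have hσ01 : σ ∈ Icc (0 : ℝ) 1 := ⟨hσ.1, hσ.2.trans hs1⟩
      have hσδ : |σ| < δ := by
        rw [abs_of_nonneg hσ.1]; exact lt_of_le_of_lt hσ.2 hsδ
      have bound : ∀ u ∈ uIcc t₀ t,
          ‖derivWithin (fun t' => derivWithin (fun s' => ψ t' s') (Icc (0 : ℝ) 1) σ)
            (Icc (0 : ℝ) T) u - L‖ ≤ ε / 2 := by
        intro u hu
        have huT : u ∈ Icc (0 : ℝ) T := hsub hu
        have hut : |u - t₀| ≤ |t - t₀| := by
          rcases le_total t₀ t with h | h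
          · rw [uIcc_of_le h] at hu
            rw [abs_of_nonneg (by linarith [hu.1]), abs_of_nonneg (by linarith)]
            linarith [hu.2]
          · rw [uIcc_of_ge h] at hu
            rw [abs_of_nonpos (by linarith [hu.2]), abs_of_nonpos (by linarith)]
            linarith [hu.1]
        have hd : dist ((u, σ) : ℝ × ℝ) (t₀, 0) < δ := by
          rw [Prod.dist_eq]
          apply max_lt
          · rw [Real.dist_eq]; exact lt_of_le_of_lt hut htδ
          · rw [Real.dist_eq, sub_zero]; exact hσδ
        have := hδε (Set.mk_mem_prod huT hσ01) hd
        simp only [Real.dist_eq] at this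
        exact le_of_lt this
      have hf : ∀ u ∈ uIcc t₀ t,
          HasDerivWithinAt
            (fun u' => derivWithin (fun s' => ψ u' s') (Icc (0 : ℝ) 1) σ - L * u')
            (derivWithin (fun t' => derivWithin (fun s' => ψ t' s') (Icc (0 : ℝ) 1) σ)
              (Icc (0 : ℝ) T) u - L) (uIcc t₀ t) u := by
        intro u hu
        have h1 := ((hdts u (hsub hu) σ hσ01).hasDerivWithinAt).mono hsub
        have h2 : HasDerivWithinAt (fun u' : ℝ => L * u') L (uIcc t₀ t) u := by
          simpa using ((hasDerivAt_id u).const_mul L).hasDerivWithinAt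
        exact h1.sub h2
      have := Convex.norm_image_sub_le_of_norm_hasDerivWithin_le hf bound
        (convex_uIcc t₀ t) left_mem_uIcc right_mem_uIcc
      simp only [Real.norm_eq_abs] at this
      calc |(derivWithin (fun s' => ψ t s') (Icc (0 : ℝ) 1) σ -
              derivWithin (fun s' => ψ t₀ s') (Icc (0 : ℝ) 1) σ) - L * (t - t₀)|
          = |(derivWithin (fun s' => ψ t s') (Icc (0 : ℝ) 1) σ - L * t) -
              (derivWithin (fun s' => ψ t₀ s') (Icc (0 : ℝ) 1) σ - L * t₀)| := by
            ring_nf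
        _ ≤ ε / 2 * |t - t₀| := this
    -- outer MVT in the s-variable
    have hsub01 : Icc (0 : ℝ) s ⊆ Icc (0 : ℝ) 1 := Icc_subset_Icc le_rfl hs1
    have hf : ∀ σ ∈ Icc (0 : ℝ) s,
        HasDerivWithinAt (fun σ' => ψ t σ' - ψ t₀ σ' - L * (t - t₀) * σ')
          ((derivWithin (fun s' => ψ t s') (Icc (0 : ℝ) 1) σ -
            derivWithin (fun s' => ψ t₀ s') (Icc (0 : ℝ) 1) σ) - L * (t - t₀))
          (Icc (0 : ℝ) s) σ := by
      intro σ hσ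
      have hσ01 : σ ∈ Icc (0 : ℝ) 1 := hsub01 hσ
      have h1 := ((hds t htmem σ hσ01).hasDerivWithinAt).mono hsub01
      have h2 := ((hds t₀ ht₀mem σ hσ01).hasDerivWithinAt).mono hsub01
      have h3 : HasDerivWithinAt (fun σ' : ℝ => L * (t - t₀) * σ') (L * (t - t₀))
          (Icc (0 : ℝ) s) σ := by
        simpa using ((hasDerivAt_id σ).const_mul (L * (t - t₀))).hasDerivWithinAt
      exact (h1.sub h2).sub h3
    have hb : ∀ σ ∈ Icc (0 : ℝ) s,
        ‖(derivWithin (fun s' => ψ t s') (Icc (0 : ℝ) 1) σ -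
          derivWithin (fun s' => ψ t₀ s') (Icc (0 : ℝ) 1) σ) - L * (t - t₀)‖ ≤
          ε / 2 * |t - t₀| := by
      intro σ hσ; rw [Real.norm_eq_abs]; exact inner σ hσ
    have hmvt := Convex.norm_image_sub_le_of_norm_hasDerivWithin_le hf hb
      (convex_Icc 0 s) (left_mem_Icc.2 hs0) (right_mem_Icc.2 hs0)
    simp only [Real.norm_eq_abs] at hmvt
    calc |(ψ t s - ψ t 0) - (ψ t₀ s - ψ t₀ 0) - L * s * (t - t₀)|
        = |(ψ t s - ψ t₀ s - L * (t - t₀) * s) - (ψ t 0 - ψ t₀ 0 - L * (t - t₀) * 0)| := by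
          ring_nf
      _ ≤ ε / 2 * |t - t₀| * |s - 0| := hmvt
      _ = ε / 2 * s * |t - t₀| := by
          rw [sub_zero, abs_of_pos hspos]; ring
  -- Step 2: transfer the estimate through the t-derivative
  have claim2 : |derivWithin (fun t' => ψ t' s) (Icc (0 : ℝ) T) t₀ -
      derivWithin (fun t' => ψ t' 0) (Icc (0 : ℝ) T) t₀ - L * s| ≤ ε / 2 * s := by
    have hG : HasDerivWithinAt (fun t => ψ t s - ψ t 0)
        (derivWithin (fun t' => ψ t' s) (Icc (0 : ℝ) T) t₀ -
          derivWithin (fun t' => ψ t' 0) (Icc (0 : ℝ) T) t₀) (Icc (0 : ℝ) T) t₀ :=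
      ((hdt t₀ ht₀mem s ⟨hs0, hs1⟩).hasDerivWithinAt).sub
        ((hdt t₀ ht₀mem 0 h01).hasDerivWithinAt)
    rw [hasDerivWithinAt_iff_tendsto_slope] at hG
    have htend : Filter.Tendsto
        (fun t => |slope (fun t' => ψ t' s - ψ t' 0) t₀ t - L * s|)
        (nhdsWithin t₀ (Icc (0 : ℝ) T \ {t₀}))
        (nhds |derivWithin (fun t' => ψ t' s) (Icc (0 : ℝ) T) t₀ -
          derivWithin (fun t' => ψ t' 0) (Icc (0 : ℝ) T) t₀ - L * s|) :=
      (hG.sub tendsto_const_nhds).abs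
    refine le_of_tendsto htend ?_
    filter_upwards [self_mem_nhdsWithin,
      nhdsWithin_le_nhds (Metric.ball_mem_nhds t₀ hδ)] with t ht htb
    obtain ⟨htIcc, htne⟩ := ht
    have htne' : t ≠ t₀ := htne
    have htd : |t - t₀| < δ := by rwa [Metric.mem_ball, Real.dist_eq] at htb
    have habs : 0 < |t - t₀| := abs_pos.2 (sub_ne_zero.2 htne')
    rw [slope_def_field]
    have key := claim1 t htIcc htd
    have : (ψ t s - ψ t 0 - (ψ t₀ s - ψ t₀ 0)) / (t - t₀) - L * s =
        ((ψ t s - ψ t 0) - (ψ t₀ s - ψ t₀ 0) - L * s * (t - t₀)) / (t - t₀) := by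
      rw [div_sub' (sub_ne_zero.2 htne')]
      ring_nf
    rw [this, abs_div]
    rw [div_le_iff₀ habs]
    exact key
  -- conclude
  rw [slope_def_field, Real.dist_eq, sub_zero]
  have hne : s ≠ 0 := ne_of_gt hspos
  have : (derivWithin (fun t' => ψ t' s) (Icc (0 : ℝ) T) t₀ -
      derivWithin (fun t' => ψ t' 0) (Icc (0 : ℝ) T) t₀) / s - L =
      (derivWithin (fun t' => ψ t' s) (Icc (0 : ℝ) T) t₀ -
        derivWithin (fun t' => ψ t' 0) (Icc (0 : ℝ) T) t₀ - L * s) / s := by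
    rw [div_sub' hne]
    ring_nf
  rw [this, abs_div, abs_of_pos hspos, div_lt_iff₀ hspos]
  calc |derivWithin (fun t' => ψ t' s) (Icc (0 : ℝ) T) t₀ -
        derivWithin (fun t' => ψ t' 0) (Icc (0 : ℝ) T) t₀ - L * s|
      ≤ ε / 2 * s := claim2
    _ < ε * s := by nlinarith
end

section
/- Let A, B, G ∈ ℝ^{n×n}-sized matrices of compatible dimensions, R = Rᵀ > 0, Q = Qᵀ ≥ 0, Γ, and suppose P, Λ, H solve on [0,T] the coupled Riccati-type ODE system: Ṗ = −AᵀP − PA + PBR⁻¹BᵀP − Q with P(T) = Q_f; Ḣ = −AᵀH + PBR⁻¹BᵀH − H[A + G − BR⁻¹Bᵀ(P + Λ + H + Hᵀ)] − PG + QΓ with H(T) = −Q_fΓ_f; and the stated equation for Λ̇ with Λ(T) = Γ_fᵀQ_fΓ_f. Then Z := P + Λ + H + Hᵀ satisfies the standard Riccati equation Ż = −(A+G)ᵀZ − Z(A+G) + ZBR⁻¹BᵀZ − (I−Γ)ᵀQ(I−Γ) with Z(T) = (I−Γ_fᵀ)Q_f(I−Γ_f). -/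
open Matrix Set

attribute [local instance] Matrix.normedAddCommGroup Matrix.normedSpace

private lemma matrix_norm_mul_le' {n : ℕ} (X Y : Matrix (Fin n) (Fin n) ℝ) :
    ‖X * Y‖ ≤ n * ‖X‖ * ‖Y‖ := by
  rw [Matrix.norm_le_iff (by positivity)]
  intro i j
  calc ‖(X * Y) i j‖ = ‖∑ k, X i k * Y k j‖ := by rw [Matrix.mul_apply]
    _ ≤ ∑ k, ‖X i k * Y k j‖ := norm_sum_le _ _
    _ ≤ ∑ _k : Fin n, ‖X‖ * ‖Y‖ := by
        refine Finset.sum_le_sum fun k _ => ?_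
        rw [norm_mul]
        exact mul_le_mul (Matrix.norm_entry_le_entrywise_sup_norm X)
          (Matrix.norm_entry_le_entrywise_sup_norm Y) (norm_nonneg _) (norm_nonneg _)
    _ = n * ‖X‖ * ‖Y‖ := by simp [Finset.sum_const, mul_assoc]

/-- Uniqueness-of-zero for a linear matrix ODE `f' = F₁ f + f F₂` with bounded coefficients
and terminal condition `f b = 0`. -/
private lemma linear_matrix_ode_zero' {n : ℕ} {a b : ℝ}
    (F₁ F₂ : ℝ → Matrix (Fin n) (Fin n) ℝ) (C : ℝ)
    (hC : ∀ t, ‖F₁ t‖ + ‖F₂ t‖ ≤ C)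
    {f : ℝ → Matrix (Fin n) (Fin n) ℝ} (hf : ContinuousOn f (Icc a b))
    (hf' : ∀ t ∈ Ioc a b, HasDerivAt f (F₁ t * f t + f t * F₂ t) t)
    (hfb : f b = 0) : ∀ t ∈ Icc a b, f t = 0 := by
  have key := ODE_solution_unique_of_mem_Icc_left
    (v := fun t X => F₁ t * X + X * F₂ t) (s := fun _ => univ)
    (K := (n * C).toNNReal) (f := f) (g := fun _ => 0) (a := a) (b := b)
    ?_ hf (fun t ht => (hf' t ht).hasDerivWithinAt) (fun _ _ => mem_univ _)
    continuousOn_const ?_ (fun _ _ => mem_univ _) (by simp [hfb])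
  · exact fun t ht => key ht
  · intro t _
    rw [lipschitzOnWith_univ]
    apply LipschitzWith.of_dist_le_mul
    intro X Y
    rw [dist_eq_norm, dist_eq_norm]
    have heq : (F₁ t * X + X * F₂ t) - (F₁ t * Y + Y * F₂ t)
        = F₁ t * (X - Y) + (X - Y) * F₂ t := by noncomm_ring
    rw [heq]
    calc ‖F₁ t * (X - Y) + (X - Y) * F₂ t‖
        ≤ ‖F₁ t * (X - Y)‖ + ‖(X - Y) * F₂ t‖ := norm_add_le _ _
      _ ≤ n * ‖F₁ t‖ * ‖X - Y‖ + n * ‖X - Y‖ * ‖F₂ t‖ :=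
          add_le_add (matrix_norm_mul_le' _ _) (matrix_norm_mul_le' _ _)
      _ = n * (‖F₁ t‖ + ‖F₂ t‖) * ‖X - Y‖ := by ring
      _ ≤ n * C * ‖X - Y‖ := by
          apply mul_le_mul_of_nonneg_right _ (norm_nonneg _)
          exact mul_le_mul_of_nonneg_left (hC t) (by positivity)
      _ ≤ ((n * C).toNNReal : ℝ) * ‖X - Y‖ :=
          mul_le_mul_of_nonneg_right (Real.le_coe_toNNReal _) (norm_nonneg _)
  · intro t ht
    have h0 : (fun (X : Matrix (Fin n) (Fin n) ℝ) => F₁ t * X + X * F₂ t) 0 = 0 := by simp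
    simpa [h0] using (hasDerivWithinAt_const t _ (0 : Matrix (Fin n) (Fin n) ℝ))

private lemma continuousOn_matrix' {α : Type*} [TopologicalSpace α] {m p : ℕ} {s : Set α}
    {f : α → Matrix (Fin m) (Fin p) ℝ} (h : ∀ i j, ContinuousOn (fun x => f x i j) s) :
    ContinuousOn f s :=
  continuousOn_pi.2 fun i => continuousOn_pi.2 fun j => h i j

private lemma ContinuousOn.matrix_entry' {α : Type*} [TopologicalSpace α] {m p : ℕ} {s : Set α}
    {f : α → Matrix (Fin m) (Fin p) ℝ} (h : ContinuousOn f s) (i : Fin m) (j : Fin p) :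
    ContinuousOn (fun x => f x i j) s :=
  (continuousOn_pi.1 (continuousOn_pi.1 h i) j)

private lemma ContinuousOn.matrix_mulOn' {α : Type*} [TopologicalSpace α] {m p q : ℕ} {s : Set α}
    {f : α → Matrix (Fin m) (Fin p) ℝ} {g : α → Matrix (Fin p) (Fin q) ℝ}
    (hf : ContinuousOn f s) (hg : ContinuousOn g s) :
    ContinuousOn (fun x => f x * g x) s := by
  apply continuousOn_matrix'
  intro i j
  have h : (fun x => (f x * g x) i j) = fun x => ∑ k, f x i k * g x k j := by
    funext x; rw [Matrix.mul_apply]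
  rw [h]
  exact continuousOn_finset_sum _ fun k _ =>
    (ContinuousOn.matrix_entry' hf i k).mul (ContinuousOn.matrix_entry' hg k j)

private lemma ContinuousOn.matrix_transposeOn' {α : Type*} [TopologicalSpace α] {m p : ℕ}
    {s : Set α} {f : α → Matrix (Fin m) (Fin p) ℝ} (hf : ContinuousOn f s) :
    ContinuousOn (fun x => (f x)ᵀ) s :=
  continuousOn_matrix' fun i j => ContinuousOn.matrix_entry' hf j i

private lemma skewP' {n : ℕ} (A Q K P : Matrix (Fin n) (Fin n) ℝ) (hK : Kᵀ = K) (hQ : Qᵀ = Q) :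
    (-(Aᵀ * P) - P * A + P * K * P - Q) - (-(Aᵀ * P) - P * A + P * K * P - Q)ᵀ
    = (-Aᵀ + Pᵀ * K) * (P - Pᵀ) + (P - Pᵀ) * (-A + K * P) := by
  simp only [Matrix.transpose_mul, Matrix.transpose_add, Matrix.transpose_sub,
    Matrix.transpose_neg, Matrix.transpose_transpose, hK, hQ]
  noncomm_ring

private lemma skewL' {n : ℕ} (A G Q Γ K P Λ H : Matrix (Fin n) (Fin n) ℝ)
    (hK : Kᵀ = K) (hQ : Qᵀ = Q) :
    (-((Λ + H) * K * (Λ + Hᵀ))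
        - Λ * (A + G - K * (P + Λ + H + Hᵀ))
        - (A + G - K * (P + Λ + H + Hᵀ))ᵀ * Λ
        + Hᵀ * K * H - Hᵀ * G - Gᵀ * H - Γᵀ * Q * Γ)
    - (-((Λ + H) * K * (Λ + Hᵀ))
        - Λ * (A + G - K * (P + Λ + H + Hᵀ))
        - (A + G - K * (P + Λ + H + Hᵀ))ᵀ * Λ
        + Hᵀ * K * H - Hᵀ * G - Gᵀ * H - Γᵀ * Q * Γ)ᵀ
    = (-((Λᵀ + H) * K) - (A + G - K * (P + Λ + H + Hᵀ))ᵀ) * (Λ - Λᵀ)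
      + (Λ - Λᵀ) * (-(K * (Λ + Hᵀ)) - (A + G - K * (P + Λ + H + Hᵀ))) := by
  simp only [Matrix.transpose_mul, Matrix.transpose_add, Matrix.transpose_sub,
    Matrix.transpose_neg, Matrix.transpose_transpose, hK, hQ]
  noncomm_ring

private lemma sumRic' {n : ℕ} (A G Q Γ K P Λ H : Matrix (Fin n) (Fin n) ℝ)
    (hK : Kᵀ = K) (hQ : Qᵀ = Q) (hPs : Pᵀ = P) (hΛs : Λᵀ = Λ) :
    ((-(Aᵀ * P) - P * A + P * K * P - Q)
    + (-((Λ + H) * K * (Λ + Hᵀ))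
        - Λ * (A + G - K * (P + Λ + H + Hᵀ))
        - (A + G - K * (P + Λ + H + Hᵀ))ᵀ * Λ
        + Hᵀ * K * H - Hᵀ * G - Gᵀ * H - Γᵀ * Q * Γ)
    + (-(Aᵀ * H) + P * K * H
        - H * (A + G - K * (P + Λ + H + Hᵀ))
        - P * G + Q * Γ)
    + (-(Aᵀ * H) + P * K * H
        - H * (A + G - K * (P + Λ + H + Hᵀ))
        - P * G + Q * Γ)ᵀ)
    = (-((A + G)ᵀ * (P + Λ + H + Hᵀ))
          - (P + Λ + H + Hᵀ) * (A + G)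
          + (P + Λ + H + Hᵀ) * K * (P + Λ + H + Hᵀ)
          - (1 - Γ)ᵀ * Q * (1 - Γ)) := by
  simp only [Matrix.transpose_mul, Matrix.transpose_add, Matrix.transpose_sub,
    Matrix.transpose_neg, Matrix.transpose_transpose, Matrix.transpose_one, hK, hQ, hPs, hΛs]
  noncomm_ring

/-- if `(P, Λ, H)` solve the coupled Riccati-type ODE system of the
LQ mean field social optimization problem on `[0,T]` (with the stated terminal
conditions), then `Z := P + Λ + H + Hᵀ` satisfies the standard Riccati equation
`Ż = −(A+G)ᵀZ − Z(A+G) + Z B R⁻¹ Bᵀ Z − (I−Γ)ᵀ Q (I−Γ)` with terminal value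
`Z(T) = (I−Γ_fᵀ) Q_f (I−Γ_f)`.  The ODEs are stated entrywise. -/
theorem Z_satisfies_riccati {n n₁ : ℕ} (T : ℝ) (hT : 0 < T)
    (A G Q Γ Qf Γf : Matrix (Fin n) (Fin n) ℝ)
    (B : Matrix (Fin n) (Fin n₁) ℝ) (R : Matrix (Fin n₁) (Fin n₁) ℝ)
    (hR : R.PosDef) (hQ : Q.PosSemidef) (hQf : Qf.PosSemidef)
    (P Λ H : ℝ → Matrix (Fin n) (Fin n) ℝ)
    -- Ṗ = −AᵀP − PA + PBR⁻¹BᵀP − Q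
    (hP : ∀ t ∈ Icc (0 : ℝ) T, ∀ i j, HasDerivAt (fun s => P s i j)
      ((-(Aᵀ * P t) - P t * A + P t * B * R⁻¹ * Bᵀ * P t - Q) i j) t)
    -- Λ̇ = −(Λ+H)BR⁻¹Bᵀ(Λ+Hᵀ) − Λ[A+G−BR⁻¹Bᵀ(P+Λ+H+Hᵀ)]
    --      − [A+G−BR⁻¹Bᵀ(P+Λ+H+Hᵀ)]ᵀΛ + HᵀBR⁻¹BᵀH − HᵀG − GᵀH − ΓᵀQΓ
    (hΛ : ∀ t ∈ Icc (0 : ℝ) T, ∀ i j, HasDerivAt (fun s => Λ s i j)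
      ((-((Λ t + H t) * B * R⁻¹ * Bᵀ * (Λ t + (H t)ᵀ))
        - Λ t * (A + G - B * R⁻¹ * Bᵀ * (P t + Λ t + H t + (H t)ᵀ))
        - (A + G - B * R⁻¹ * Bᵀ * (P t + Λ t + H t + (H t)ᵀ))ᵀ * Λ t
        + (H t)ᵀ * B * R⁻¹ * Bᵀ * H t - (H t)ᵀ * G - Gᵀ * H t - Γᵀ * Q * Γ) i j) t)
    -- Ḣ = −AᵀH + PBR⁻¹BᵀH − H[A+G−BR⁻¹Bᵀ(P+Λ+H+Hᵀ)] − PG + QΓ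
    (hH : ∀ t ∈ Icc (0 : ℝ) T, ∀ i j, HasDerivAt (fun s => H s i j)
      ((-(Aᵀ * H t) + P t * B * R⁻¹ * Bᵀ * H t
        - H t * (A + G - B * R⁻¹ * Bᵀ * (P t + Λ t + H t + (H t)ᵀ))
        - P t * G + Q * Γ) i j) t)
    -- terminal conditions
    (hPT : P T = Qf) (hΛT : Λ T = Γfᵀ * Qf * Γf) (hHT : H T = -(Qf * Γf)) :
    (∀ t ∈ Icc (0 : ℝ) T, ∀ i j,
      HasDerivAt (fun s => (P s + Λ s + H s + (H s)ᵀ) i j)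
        (((-((A + G)ᵀ * (P t + Λ t + H t + (H t)ᵀ))
          - (P t + Λ t + H t + (H t)ᵀ) * (A + G)
          + (P t + Λ t + H t + (H t)ᵀ) * B * R⁻¹ * Bᵀ * (P t + Λ t + H t + (H t)ᵀ)
          - (1 - Γ)ᵀ * Q * (1 - Γ) : Matrix (Fin n) (Fin n) ℝ)) i j) t)
    ∧ P T + Λ T + H T + (H T)ᵀ = (1 - Γfᵀ) * Qf * (1 - Γf) := by
  -- symmetry facts
  have hQs : Qᵀ = Q := by
    have h2 : Qᴴ = Qᵀ := by ext i j; simp [conjTranspose_apply]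
    rw [← h2, hQ.isHermitian]
  have hQfs : Qfᵀ = Qf := by
    have h2 : Qfᴴ = Qfᵀ := by ext i j; simp [conjTranspose_apply]
    rw [← h2, hQf.isHermitian]
  have hRs : Rᵀ = R := by
    have h2 : Rᴴ = Rᵀ := by ext i j; simp [conjTranspose_apply]
    rw [← h2, hR.1]
  have hRi : R⁻¹ᵀ = R⁻¹ := by rw [Matrix.transpose_nonsing_inv, hRs]
  have hK : (B * R⁻¹ * Bᵀ)ᵀ = B * R⁻¹ * Bᵀ := by
    simp only [Matrix.transpose_mul, Matrix.transpose_transpose, hRi, Matrix.mul_assoc]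
  have hassoc : ∀ X Y : Matrix (Fin n) (Fin n) ℝ,
      X * B * R⁻¹ * Bᵀ * Y = X * (B * R⁻¹ * Bᵀ) * Y := fun X Y => by
    simp only [Matrix.mul_assoc]
  -- continuity
  have hPc : ContinuousOn P (Icc 0 T) :=
    continuousOn_matrix' fun i j t ht => ((hP t ht i j).continuousAt).continuousWithinAt
  have hΛc : ContinuousOn Λ (Icc 0 T) :=
    continuousOn_matrix' fun i j t ht => ((hΛ t ht i j).continuousAt).continuousWithinAt
  have hHc : ContinuousOn H (Icc 0 T) :=
    continuousOn_matrix' fun i j t ht => ((hH t ht i j).continuousAt).continuousWithinAt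
  -- clamping map
  set σ : ℝ → ℝ := fun t => max 0 (min t T) with hσdef
  have hσmem : ∀ t, σ t ∈ Icc (0 : ℝ) T :=
    fun t => ⟨le_max_left _ _, max_le hT.le (min_le_right _ _)⟩
  have hσid : ∀ t ∈ Icc (0 : ℝ) T, σ t = t := by
    intro t ht
    rw [hσdef]
    show max 0 (min t T) = t
    rw [min_eq_left ht.2, max_eq_right ht.1]
  -- Step 1 : P is symmetric on [0,T]
  have hPsym : ∀ t ∈ Icc (0 : ℝ) T, (P t)ᵀ = P t := by
    have hgc : ContinuousOn
        (fun t => ‖-Aᵀ + (P t)ᵀ * (B * R⁻¹ * Bᵀ)‖ + ‖-A + (B * R⁻¹ * Bᵀ) * P t‖) (Icc 0 T) :=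
      ((continuousOn_const.add ((ContinuousOn.matrix_transposeOn' hPc).matrix_mulOn'
          continuousOn_const)).norm).add
        ((continuousOn_const.add (continuousOn_const.matrix_mulOn' hPc)).norm)
    obtain ⟨C₁, hC₁⟩ := isCompact_Icc.exists_bound_of_continuousOn hgc
    have hb₁ : ∀ t : ℝ,
        ‖-Aᵀ + (P (σ t))ᵀ * (B * R⁻¹ * Bᵀ)‖ + ‖-A + (B * R⁻¹ * Bᵀ) * P (σ t)‖ ≤ C₁ :=
      fun t => (le_abs_self _).trans (by simpa [Real.norm_eq_abs] using hC₁ (σ t) (hσmem t))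
    have hU' : ∀ t ∈ Ioc (0 : ℝ) T, HasDerivAt (fun s => P s - (P s)ᵀ)
        ((-Aᵀ + (P (σ t))ᵀ * (B * R⁻¹ * Bᵀ)) * (P t - (P t)ᵀ)
          + (P t - (P t)ᵀ) * (-A + (B * R⁻¹ * Bᵀ) * P (σ t))) t := by
      intro t ht
      have ht' : t ∈ Icc (0 : ℝ) T := ⟨ht.1.le, ht.2⟩
      rw [hσid t ht']
      have hder : HasDerivAt (fun s => P s - (P s)ᵀ)
          ((-(Aᵀ * P t) - P t * A + P t * B * R⁻¹ * Bᵀ * P t - Q)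
            - (-(Aᵀ * P t) - P t * A + P t * B * R⁻¹ * Bᵀ * P t - Q)ᵀ) t := by
        refine hasDerivAt_pi.2 fun i => hasDerivAt_pi.2 fun j => ?_
        simpa only [Pi.sub_def, Matrix.sub_apply, Matrix.add_apply, Matrix.neg_apply,
          Matrix.transpose_apply] using (hP t ht' i j).sub (hP t ht' j i)
      have heq : (-(Aᵀ * P t) - P t * A + P t * B * R⁻¹ * Bᵀ * P t - Q)
            - (-(Aᵀ * P t) - P t * A + P t * B * R⁻¹ * Bᵀ * P t - Q)ᵀ
          = (-Aᵀ + (P t)ᵀ * (B * R⁻¹ * Bᵀ)) * (P t - (P t)ᵀ)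
            + (P t - (P t)ᵀ) * (-A + (B * R⁻¹ * Bᵀ) * P t) := by
        simp only [hassoc]
        exact skewP' A Q (B * R⁻¹ * Bᵀ) (P t) hK hQs
      rw [← heq]
      exact hder
    have hUzero := linear_matrix_ode_zero'
      (fun t => -Aᵀ + (P (σ t))ᵀ * (B * R⁻¹ * Bᵀ))
      (fun t => -A + (B * R⁻¹ * Bᵀ) * P (σ t)) C₁ hb₁
      (hPc.sub (ContinuousOn.matrix_transposeOn' hPc)) hU'
      (by rw [Pi.sub_apply, hPT, hQfs]; simp)
    exact fun t ht => (sub_eq_zero.1 (hUzero t ht)).symm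
  -- Step 2 : Λ is symmetric on [0,T]
  have hΛsym : ∀ t ∈ Icc (0 : ℝ) T, (Λ t)ᵀ = Λ t := by
    have hEc : ContinuousOn (fun t => P t + Λ t + H t + (H t)ᵀ) (Icc 0 T) :=
      ((hPc.add hΛc).add hHc).add (ContinuousOn.matrix_transposeOn' hHc)
    have hgc : ContinuousOn (fun t =>
        ‖-(((Λ t)ᵀ + H t) * (B * R⁻¹ * Bᵀ))
          - (A + G - B * R⁻¹ * Bᵀ * (P t + Λ t + H t + (H t)ᵀ))ᵀ‖
        + ‖-((B * R⁻¹ * Bᵀ) * (Λ t + (H t)ᵀ))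
          - (A + G - B * R⁻¹ * Bᵀ * (P t + Λ t + H t + (H t)ᵀ))‖) (Icc 0 T) := by
      have hMc : ContinuousOn
          (fun t => A + G - B * R⁻¹ * Bᵀ * (P t + Λ t + H t + (H t)ᵀ)) (Icc 0 T) :=
        continuousOn_const.sub (continuousOn_const.matrix_mulOn' hEc)
      exact ((((((ContinuousOn.matrix_transposeOn' hΛc).add hHc).matrix_mulOn'
            continuousOn_const).neg).sub
            (ContinuousOn.matrix_transposeOn' hMc)).norm).add
        ((((continuousOn_const.matrix_mulOn'
            (hΛc.add (ContinuousOn.matrix_transposeOn' hHc))).neg).sub hMc).norm)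
    obtain ⟨C₂, hC₂⟩ := isCompact_Icc.exists_bound_of_continuousOn hgc
    have hb₂ : ∀ t : ℝ,
        ‖-(((Λ (σ t))ᵀ + H (σ t)) * (B * R⁻¹ * Bᵀ))
          - (A + G - B * R⁻¹ * Bᵀ * (P (σ t) + Λ (σ t) + H (σ t) + (H (σ t))ᵀ))ᵀ‖
        + ‖-((B * R⁻¹ * Bᵀ) * (Λ (σ t) + (H (σ t))ᵀ))
          - (A + G - B * R⁻¹ * Bᵀ * (P (σ t) + Λ (σ t) + H (σ t) + (H (σ t))ᵀ))‖ ≤ C₂ :=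
      fun t => (le_abs_self _).trans (by simpa [Real.norm_eq_abs] using hC₂ (σ t) (hσmem t))
    have hW' : ∀ t ∈ Ioc (0 : ℝ) T, HasDerivAt (fun s => Λ s - (Λ s)ᵀ)
        ((-(((Λ (σ t))ᵀ + H (σ t)) * (B * R⁻¹ * Bᵀ))
            - (A + G - B * R⁻¹ * Bᵀ * (P (σ t) + Λ (σ t) + H (σ t) + (H (σ t))ᵀ))ᵀ)
              * (Λ t - (Λ t)ᵀ)
          + (Λ t - (Λ t)ᵀ) *
            (-((B * R⁻¹ * Bᵀ) * (Λ (σ t) + (H (σ t))ᵀ))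
            - (A + G - B * R⁻¹ * Bᵀ * (P (σ t) + Λ (σ t) + H (σ t) + (H (σ t))ᵀ)))) t := by
      intro t ht
      have ht' : t ∈ Icc (0 : ℝ) T := ⟨ht.1.le, ht.2⟩
      rw [hσid t ht']
      have hder : HasDerivAt (fun s => Λ s - (Λ s)ᵀ)
          ((-((Λ t + H t) * B * R⁻¹ * Bᵀ * (Λ t + (H t)ᵀ))
            - Λ t * (A + G - B * R⁻¹ * Bᵀ * (P t + Λ t + H t + (H t)ᵀ))
            - (A + G - B * R⁻¹ * Bᵀ * (P t + Λ t + H t + (H t)ᵀ))ᵀ * Λ t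
            + (H t)ᵀ * B * R⁻¹ * Bᵀ * H t - (H t)ᵀ * G - Gᵀ * H t - Γᵀ * Q * Γ)
          - (-((Λ t + H t) * B * R⁻¹ * Bᵀ * (Λ t + (H t)ᵀ))
            - Λ t * (A + G - B * R⁻¹ * Bᵀ * (P t + Λ t + H t + (H t)ᵀ))
            - (A + G - B * R⁻¹ * Bᵀ * (P t + Λ t + H t + (H t)ᵀ))ᵀ * Λ t
            + (H t)ᵀ * B * R⁻¹ * Bᵀ * H t - (H t)ᵀ * G - Gᵀ * H t - Γᵀ * Q * Γ)ᵀ) t := by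
        refine hasDerivAt_pi.2 fun i => hasDerivAt_pi.2 fun j => ?_
        simpa only [Pi.sub_def, Matrix.sub_apply, Matrix.add_apply, Matrix.neg_apply,
          Matrix.transpose_apply] using (hΛ t ht' i j).sub (hΛ t ht' j i)
      have heq : (-((Λ t + H t) * B * R⁻¹ * Bᵀ * (Λ t + (H t)ᵀ))
            - Λ t * (A + G - B * R⁻¹ * Bᵀ * (P t + Λ t + H t + (H t)ᵀ))
            - (A + G - B * R⁻¹ * Bᵀ * (P t + Λ t + H t + (H t)ᵀ))ᵀ * Λ t
            + (H t)ᵀ * B * R⁻¹ * Bᵀ * H t - (H t)ᵀ * G - Gᵀ * H t - Γᵀ * Q * Γ)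
          - (-((Λ t + H t) * B * R⁻¹ * Bᵀ * (Λ t + (H t)ᵀ))
            - Λ t * (A + G - B * R⁻¹ * Bᵀ * (P t + Λ t + H t + (H t)ᵀ))
            - (A + G - B * R⁻¹ * Bᵀ * (P t + Λ t + H t + (H t)ᵀ))ᵀ * Λ t
            + (H t)ᵀ * B * R⁻¹ * Bᵀ * H t - (H t)ᵀ * G - Gᵀ * H t - Γᵀ * Q * Γ)ᵀ
          = (-(((Λ t)ᵀ + H t) * (B * R⁻¹ * Bᵀ))
              - (A + G - B * R⁻¹ * Bᵀ * (P t + Λ t + H t + (H t)ᵀ))ᵀ) * (Λ t - (Λ t)ᵀ)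
            + (Λ t - (Λ t)ᵀ) *
              (-((B * R⁻¹ * Bᵀ) * (Λ t + (H t)ᵀ))
              - (A + G - B * R⁻¹ * Bᵀ * (P t + Λ t + H t + (H t)ᵀ))) := by
        simp only [hassoc]
        exact skewL' A G Q Γ (B * R⁻¹ * Bᵀ) (P t) (Λ t) (H t) hK hQs
      rw [← heq]
      exact hder
    have hWzero := linear_matrix_ode_zero'
      (fun t => -(((Λ (σ t))ᵀ + H (σ t)) * (B * R⁻¹ * Bᵀ))
          - (A + G - B * R⁻¹ * Bᵀ * (P (σ t) + Λ (σ t) + H (σ t) + (H (σ t))ᵀ))ᵀ)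
      (fun t => -((B * R⁻¹ * Bᵀ) * (Λ (σ t) + (H (σ t))ᵀ))
          - (A + G - B * R⁻¹ * Bᵀ * (P (σ t) + Λ (σ t) + H (σ t) + (H (σ t))ᵀ))) C₂ hb₂
      (hΛc.sub (ContinuousOn.matrix_transposeOn' hΛc)) hW'
      (by
        rw [Pi.sub_apply, hΛT]
        simp only [Matrix.transpose_mul, Matrix.transpose_transpose, hQfs, Matrix.mul_assoc]
        simp)
    exact fun t ht => (sub_eq_zero.1 (hWzero t ht)).symm
  -- conclusion
  constructor
  · intro t ht i j
    have hkey : ((-(Aᵀ * P t) - P t * A + P t * B * R⁻¹ * Bᵀ * P t - Q)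
        + (-((Λ t + H t) * B * R⁻¹ * Bᵀ * (Λ t + (H t)ᵀ))
            - Λ t * (A + G - B * R⁻¹ * Bᵀ * (P t + Λ t + H t + (H t)ᵀ))
            - (A + G - B * R⁻¹ * Bᵀ * (P t + Λ t + H t + (H t)ᵀ))ᵀ * Λ t
            + (H t)ᵀ * B * R⁻¹ * Bᵀ * H t - (H t)ᵀ * G - Gᵀ * H t - Γᵀ * Q * Γ)
        + (-(Aᵀ * H t) + P t * B * R⁻¹ * Bᵀ * H t
            - H t * (A + G - B * R⁻¹ * Bᵀ * (P t + Λ t + H t + (H t)ᵀ))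
            - P t * G + Q * Γ)
        + (-(Aᵀ * H t) + P t * B * R⁻¹ * Bᵀ * H t
            - H t * (A + G - B * R⁻¹ * Bᵀ * (P t + Λ t + H t + (H t)ᵀ))
            - P t * G + Q * Γ)ᵀ)
        = (-((A + G)ᵀ * (P t + Λ t + H t + (H t)ᵀ))
          - (P t + Λ t + H t + (H t)ᵀ) * (A + G)
          + (P t + Λ t + H t + (H t)ᵀ) * B * R⁻¹ * Bᵀ * (P t + Λ t + H t + (H t)ᵀ)
          - (1 - Γ)ᵀ * Q * (1 - Γ)) := by
      simp only [hassoc]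
      exact sumRic' A G Q Γ (B * R⁻¹ * Bᵀ) (P t) (Λ t) (H t) hK hQs
        (hPsym t ht) (hΛsym t ht)
    have hsum := (((hP t ht i j).add (hΛ t ht i j)).add (hH t ht i j)).add (hH t ht j i)
    have hfun : (fun s => (P s + Λ s + H s + (H s)ᵀ) i j)
        = fun s => P s i j + Λ s i j + H s i j + H s j i := by
      funext s; simp [Matrix.add_apply, Matrix.transpose_apply]
    have hval : ((-((A + G)ᵀ * (P t + Λ t + H t + (H t)ᵀ))
          - (P t + Λ t + H t + (H t)ᵀ) * (A + G)
          + (P t + Λ t + H t + (H t)ᵀ) * B * R⁻¹ * Bᵀ * (P t + Λ t + H t + (H t)ᵀ)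
          - (1 - Γ)ᵀ * Q * (1 - Γ) : Matrix (Fin n) (Fin n) ℝ)) i j
        = (-(Aᵀ * P t) - P t * A + P t * B * R⁻¹ * Bᵀ * P t - Q) i j
          + (-((Λ t + H t) * B * R⁻¹ * Bᵀ * (Λ t + (H t)ᵀ))
            - Λ t * (A + G - B * R⁻¹ * Bᵀ * (P t + Λ t + H t + (H t)ᵀ))
            - (A + G - B * R⁻¹ * Bᵀ * (P t + Λ t + H t + (H t)ᵀ))ᵀ * Λ t
            + (H t)ᵀ * B * R⁻¹ * Bᵀ * H t - (H t)ᵀ * G - Gᵀ * H t - Γᵀ * Q * Γ) i j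
          + (-(Aᵀ * H t) + P t * B * R⁻¹ * Bᵀ * H t
            - H t * (A + G - B * R⁻¹ * Bᵀ * (P t + Λ t + H t + (H t)ᵀ))
            - P t * G + Q * Γ) i j
          + (-(Aᵀ * H t) + P t * B * R⁻¹ * Bᵀ * H t
            - H t * (A + G - B * R⁻¹ * Bᵀ * (P t + Λ t + H t + (H t)ᵀ))
            - P t * G + Q * Γ) j i := by
      rw [← hkey]
      simp only [Matrix.add_apply, Matrix.transpose_apply]
    rw [hfun, hval]
    exact hsum
  · rw [hPT, hΛT, hHT]
    have h2 : (-(Qf * Γf))ᵀ = -(Γfᵀ * Qf) := by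
      rw [Matrix.transpose_neg, Matrix.transpose_mul, hQfs]
    rw [h2]
    noncomm_ring
end

section
/- In the systemic risk LQ model, suppose (P, Λ, H) solve on [0,T]: 0 = Ṗ − (P+q)² + ε₀ with P(T)=c; 0 = Λ̇ + (Λ+H)² − (H−q)² − 2Λ(P+Λ+2H) + ε₀ with Λ(T)=c; 0 = Ḣ − (P+q)(H−q) − H(P+Λ+2H) − ε₀ with H(T)=−c. Then Λ(t) + 2H(t) = −P(t) for all t ∈ [0,T], and consequently the feedback control û(t,x,x̄) = −[(P+q)x + (Λ+2H−q)x̄] equals (P(t)+q)(x̄ − x). -/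
open Set

/-- in the systemic risk LQ model, if `(P, Λ, H)` solve on `[0,T]`
the ODE system `0 = Ṗ − (P+q)² + ε₀`, `P(T) = c`;
`0 = Λ̇ + (Λ+H)² − (H−q)² − 2Λ(P+Λ+2H) + ε₀`, `Λ(T) = c`;
`0 = Ḣ − (P+q)(H−q) − H(P+Λ+2H) − ε₀`, `H(T) = −c`, then
`Λ(t) + 2H(t) = −P(t)` on `[0,T]`, and consequently the feedback control
`û(t,x,x̄) = −[(P+q)x + (Λ+2H−q)x̄]` equals `(P(t)+q)(x̄ − x)`. -/
theorem systemic_risk_Z1_eq_negP (T q ε₀ c : ℝ) (hT : 0 < T)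
    (hq : 0 < q) (hε₀ : 0 < ε₀) (hc : 0 < c) (hqε : q ^ 2 ≤ ε₀)
    (P Λ H : ℝ → ℝ)
    (hP : ∀ t ∈ Icc (0 : ℝ) T, HasDerivAt P ((P t + q) ^ 2 - ε₀) t)
    (hPT : P T = c)
    (hΛ : ∀ t ∈ Icc (0 : ℝ) T, HasDerivAt Λ
      (-((Λ t + H t) ^ 2) + (H t - q) ^ 2 + 2 * Λ t * (P t + Λ t + 2 * H t) - ε₀) t)
    (hΛT : Λ T = c)
    (hH : ∀ t ∈ Icc (0 : ℝ) T, HasDerivAt H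
      ((P t + q) * (H t - q) + H t * (P t + Λ t + 2 * H t) + ε₀) t)
    (hHT : H T = -c) :
    ∀ t ∈ Icc (0 : ℝ) T,
      Λ t + 2 * H t = -P t
      ∧ ∀ x xbar : ℝ,
          -((P t + q) * x + (Λ t + 2 * H t - q) * xbar)
            = (P t + q) * (xbar - x) := by
  set Z : ℝ → ℝ := fun t => Λ t + 2 * H t + P t with hZdef
  have hZ' : ∀ t ∈ Icc (0 : ℝ) T, HasDerivAt Z (Z t * Z t) t := by
    intro t ht
    have h : HasDerivAt Z _ t := ((hΛ t ht).add ((hH t ht).const_mul 2)).add (hP t ht)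
    convert h using 1
    simp only [hZdef]
    ring
  have hgc : ContinuousOn Z (Icc 0 T) :=
    fun t ht => (hZ' t ht).continuousAt.continuousWithinAt
  obtain ⟨C, hC⟩ := isCompact_Icc.exists_bound_of_continuousOn hgc
  set K := max C 0 with hK
  -- reversed function
  set Zr : ℝ → ℝ := fun t => Z (T - t) with hZrdef
  have hmem : ∀ x ∈ Icc (0 : ℝ) T, T - x ∈ Icc (0 : ℝ) T := by
    intro x hx
    constructor <;> [linarith [hx.2]; linarith [hx.1]]
  have hZr' : ∀ x ∈ Icc (0 : ℝ) T,
      HasDerivAt Zr (-(Z (T - x) * Z (T - x))) x := by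
    intro x hx
    have h1 : HasDerivAt (fun t : ℝ => T - t) (-1) x := by
      simpa using (hasDerivAt_id x).const_sub T
    have : HasDerivAt Zr _ x := (hZ' (T - x) (hmem x hx)).comp x h1
    simpa [mul_comm] using this
  have hZT : Z T = 0 := by
    show Λ T + 2 * H T + P T = 0
    rw [hΛT, hHT, hPT]; ring
  have hbound : ∀ x ∈ Icc (0 : ℝ) T, ‖Zr x‖ ≤ gronwallBound 0 K 0 (x - 0) := by
    apply norm_le_gronwallBound_of_norm_deriv_right_le
    · intro x hx
      exact ((hZr' x hx).continuousAt).continuousWithinAt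
    · intro x hx
      exact ((hZr' x (Ico_subset_Icc_self hx)).hasDerivWithinAt)
    · simp [hZrdef, hZT]
    · intro x hx
      have hx' := Ico_subset_Icc_self hx
      have hg := hC (T - x) (hmem x hx')
      have : ‖-(Z (T - x) * Z (T - x))‖ = ‖Z (T - x)‖ * ‖Z (T - x)‖ := by
        rw [norm_neg, norm_mul, mul_comm]
      rw [this]
      have h0 : ‖Zr x‖ = ‖Z (T - x)‖ := rfl
      rw [h0, add_zero]
      apply mul_le_mul_of_nonneg_right _ (norm_nonneg _)
      exact le_trans hg (le_max_left _ _)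
  have hZ0 : ∀ t ∈ Icc (0 : ℝ) T, Z t = 0 := by
    intro t ht
    have := hbound (T - t) (hmem t ht)
    rw [gronwallBound_ε0_δ0] at this
    have : ‖Zr (T - t)‖ ≤ 0 := this
    have h2 : Zr (T - t) = Z t := by simp [hZrdef]
    rw [h2] at this
    simpa using le_antisymm this (norm_nonneg _) ▸ norm_eq_zero.mp (le_antisymm this (norm_nonneg _))
  intro t ht
  have hz := hZ0 t ht
  have hz' : Λ t + 2 * H t + P t = 0 := hz
  constructor
  · linarith
  · intro x xbar
    have : Λ t + 2 * H t = -P t := by linarith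
    rw [this]; ring
end

section
/- Let N ≥ 2 and let π₁, π₂ solve on [0,T] the coupled scalar ODE system: 0 = π̇₁ − (π₁+q)² − (π₂ − q/(N−1))²(N−1) + ε₀N/(N−1), with π₁(T) = cN/(N−1); 0 = π̇₂ − 2(π₁+q)(π₂ − q/(N−1)) − (π₂ − q/(N−1))²(N−2) − ε₀N/(N−1)², with π₂(T) = −cN/(N−1)². Let P_d solve 0 = Ṗ_d − (P_d+q)² + ε₀, P_d(T) = c. Then sup_{0≤t≤T}|π₁(t) − P_d(t)| = O(1/N) and sup_{0≤t≤T}|(N−1)π₂(t) + P_d(t)| = O(1/N) as N → ∞. -/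
open Set

open Real

private lemma gronwall_zero {f : ℝ → ℝ} {f' : ℝ → ℝ} {a b K : ℝ}
    (hf : ContinuousOn f (Icc a b))
    (hf' : ∀ t ∈ Ico a b, HasDerivWithinAt f (f' t) (Ici t) t)
    (ha : f a = 0)
    (bound : ∀ t ∈ Ico a b, |f' t| ≤ K * |f t|) :
    ∀ t ∈ Icc a b, f t = 0 := by
  intro t ht
  have h := norm_le_gronwallBound_of_norm_deriv_right_le (δ := 0) (ε := 0) (K := K) hf hf'
    (by simp [ha]) (fun x hx => by simpa [Real.norm_eq_abs] using bound x hx) t ht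
  rw [gronwallBound_ε0_δ0] at h
  simpa [Real.norm_eq_abs, abs_nonpos_iff] using h

private lemma hasDerivAt_reflect {f : ℝ → ℝ} {v T s : ℝ}
    (h : HasDerivAt f v (T - s)) :
    HasDerivAt (fun u => f (T - u)) (-v) s := by
  have h2 : HasDerivAt (fun u : ℝ => T - u) (-1) s := (hasDerivAt_id s).const_sub T
  have h3 := h.comp s h2
  rw [mul_neg_one] at h3
  exact h3

set_option maxHeartbeats 1000000 in
private lemma scalar_est (T q ε₀ c : ℝ) (hT : 0 < T) (hq : 0 < q) (hε₀ : 0 < ε₀) (hc : 0 < c)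
    (hqε : q ^ 2 ≤ ε₀) (Pd : ℝ → ℝ)
    (hPd : ∀ t ∈ Icc (0:ℝ) T, HasDerivAt Pd ((Pd t + q) ^ 2 - ε₀) t)
    (hPdT : Pd T = c) :
    ∃ C : ℝ, 0 ≤ C ∧ ∀ μ : ℝ, 1 < μ → μ ≤ 2 → ∀ a : ℝ → ℝ,
      (∀ t ∈ Icc (0:ℝ) T, HasDerivAt a (μ * ((a t + q) ^ 2 - ε₀)) t) →
      a T = μ * c →
      ∀ t ∈ Icc (0:ℝ) T, |a t - Pd t| ≤ (μ - 1) * C := by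
  have hTmem : T ∈ Icc (0:ℝ) T := ⟨hT.le, le_refl T⟩
  have hne : (Icc (0:ℝ) T).Nonempty := nonempty_Icc.2 hT.le
  have contPd : ContinuousOn Pd (Icc 0 T) := fun t ht =>
    (hPd t ht).continuousAt.continuousWithinAt
  obtain ⟨z, hz, hMP'⟩ := isCompact_Icc.exists_isMaxOn hne
    (continuous_abs.comp_continuousOn contPd)
  have hMP := isMaxOn_iff.mp hMP'
  simp only [Function.comp_apply] at hMP
  set MP := |Pd z| with hMPdef
  have hMP0 : 0 ≤ MP := abs_nonneg _
  set ε : ℝ := Real.sqrt ε₀ with hεdef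
  have hε : 0 < ε := Real.sqrt_pos.2 hε₀
  have hε2 : ε ^ 2 = ε₀ := Real.sq_sqrt hε₀.le
  have hqε' : q ≤ ε := by
    nlinarith [hε, hq]
  set A : ℝ := 2 * c + ε + q with hAdef
  set K : ℝ := A + MP + 2 * q with hKdef
  have hK : 0 < K := by positivity
  set B : ℝ := (A + q) ^ 2 + ε₀ with hBdef
  have hB : 0 < B := by positivity
  set CT : ℝ := c * Real.exp (K * T) + B / K * (Real.exp (K * T) - 1) with hCTdef
  have hexpT : 1 ≤ Real.exp (K * T) := by
    rw [← Real.exp_zero]; exact Real.exp_le_exp.2 (by positivity)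
  have hCT : 0 ≤ CT := by
    rw [hCTdef]
    have h1 : (0:ℝ) ≤ c * Real.exp (K * T) := by positivity
    have h2 : (0:ℝ) ≤ B / K * (Real.exp (K * T) - 1) :=
      mul_nonneg (by positivity) (by linarith)
    linarith
  refine ⟨CT, hCT, ?_⟩
  intro μ hμ1 hμ2 a ha' haT
  have conta : ContinuousOn a (Icc 0 T) := fun t ht =>
    (ha' t ht).continuousAt.continuousWithinAt
  have hμ0 : 0 < μ := by linarith
  -- lower bound : -(q+ε) < a t
  have hlow : ∀ t ∈ Icc (0:ℝ) T, -(q + ε) < a t := by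
    by_contra hcon
    push_neg at hcon
    obtain ⟨t₀, ht₀, ht₀le⟩ := hcon
    set w : ℝ → ℝ := fun t => a t + (q + ε) with hw
    have hwT : 0 < w T := by
      simp only [hw, haT]; nlinarith
    have hwt₀ : w t₀ ≤ 0 := by simp only [hw]; linarith
    have hsub : Icc t₀ T ⊆ Icc 0 T := Icc_subset_Icc ht₀.1 le_rfl
    have hcw : ContinuousOn w (Icc t₀ T) :=
      ((conta.mono hsub).add continuousOn_const)
    obtain ⟨t₁, ht₁, hwt₁⟩ := intermediate_value_Icc ht₀.2 hcw ⟨hwt₀, hwT.le⟩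
    obtain ⟨y, hy, hR'⟩ := isCompact_Icc.exists_isMaxOn hne
      (continuous_abs.comp_continuousOn
        ((conta.add continuousOn_const) : ContinuousOn w (Icc 0 T)))
    have hR := isMaxOn_iff.mp hR'
    simp only [Function.comp_apply] at hR
    set R := |w y| with hRdef
    have hsub₁ : Icc t₁ T ⊆ Icc 0 T := Icc_subset_Icc (ht₀.1.trans ht₁.1) le_rfl
    have key : ∀ t ∈ Icc t₁ T, w t = 0 := by
      apply gronwall_zero (f' := fun t => μ * ((a t + q) ^ 2 - ε₀)) (K := 2 * (R + 2 * ε))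
        (hcw.mono (Icc_subset_Icc ht₁.1 le_rfl))
      · intro t ht
        exact (((ha' t (hsub₁ (Ico_subset_Icc_self ht))).add_const (q + ε)).hasDerivWithinAt)
      · exact hwt₁
      · intro t ht
        have htm : t ∈ Icc (0:ℝ) T := hsub₁ (Ico_subset_Icc_self ht)
        have hid : μ * ((a t + q) ^ 2 - ε₀) = μ * (w t * (w t - 2 * ε)) := by
          simp only [hw]; rw [← hε2]; ring
        have h1 : |w t| ≤ R := hR t htm
        have h2 : |w t - 2 * ε| ≤ R + 2 * ε := by
          have := abs_sub (w t) (2 * ε)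
          calc |w t - 2 * ε| ≤ |w t| + |2 * ε| := abs_sub _ _
            _ ≤ R + 2 * ε := by rw [abs_of_nonneg (by positivity : (0:ℝ) ≤ 2 * ε)]; linarith
        rw [hid, abs_mul, abs_mul, abs_of_nonneg hμ0.le]
        have h3 : 0 ≤ |w t| := abs_nonneg _
        have h4 : 0 ≤ R + 2 * ε := le_trans (abs_nonneg _) h2
        calc μ * (|w t| * |w t - 2 * ε|) ≤ 2 * (|w t| * |w t - 2 * ε|) :=
              mul_le_mul_of_nonneg_right hμ2 (by positivity)
          _ ≤ 2 * (|w t| * (R + 2 * ε)) := by gcongr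
          _ = 2 * (R + 2 * ε) * |w t| := by ring
    have : w T = 0 := key T ⟨ht₁.2, le_rfl⟩
    linarith
  -- upper bound : a t ≤ 2c + ε
  have hup : ∀ t ∈ Icc (0:ℝ) T, a t ≤ 2 * c + ε := by
    by_contra hcon
    push_neg at hcon
    obtain ⟨t₀, ht₀, hM⟩ := hcon
    set M : ℝ := 2 * c + ε with hMdef
    have haT' : a T < M := by rw [haT]; simp only [hMdef]; nlinarith
    have hsub : Icc t₀ T ⊆ Icc 0 T := Icc_subset_Icc ht₀.1 le_rfl
    have hca : ContinuousOn a (Icc t₀ T) := conta.mono hsub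
    set s : Set ℝ := Icc t₀ T ∩ a ⁻¹' {M} with hsdef
    have hsne : s.Nonempty := by
      obtain ⟨t', ht', h'⟩ := intermediate_value_Icc' ht₀.2 hca ⟨haT'.le, hM.le⟩
      exact ⟨t', ht', h'⟩
    have hscl : IsClosed s := hca.preimage_isClosed_of_isClosed isClosed_Icc isClosed_singleton
    have hbdd : BddBelow s := ⟨t₀, fun x hx => hx.1.1⟩
    set t₁ := sInf s with ht₁def
    have ht₁s : t₁ ∈ s := hscl.csInf_mem hsne hbdd
    have ht₁M : a t₁ = M := ht₁s.2
    have ht₁0 : t₀ < t₁ := by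
      rcases lt_or_eq_of_le ht₁s.1.1 with h | h
      · exact h
      · exfalso; rw [← h] at ht₁M; linarith
    have hge : ∀ t ∈ Icc t₀ t₁, M ≤ a t := by
      intro t ht
      by_contra hlt
      push_neg at hlt
      have htne : t ≠ t₁ := by intro h; rw [h, ht₁M] at hlt; exact lt_irrefl _ hlt
      have htlt : t < t₁ := lt_of_le_of_ne ht.2 htne
      obtain ⟨t', ht', h'⟩ := intermediate_value_Icc' ht.1
        (hca.mono (Icc_subset_Icc le_rfl (ht.2.trans ht₁s.1.2))) ⟨hlt.le, hM.le⟩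
      have ht'T : t' ∈ Icc t₀ T := ⟨ht'.1, ht'.2.trans (ht.2.trans ht₁s.1.2)⟩
      have : t₁ ≤ t' := csInf_le hbdd ⟨ht'T, h'⟩
      linarith [ht'.2]
    have hsub₂ : Icc t₀ t₁ ⊆ Icc 0 T := Icc_subset_Icc ht₀.1 ht₁s.1.2
    have hmono : MonotoneOn a (Icc t₀ t₁) := by
      apply monotoneOn_of_hasDerivWithinAt_nonneg (convex_Icc t₀ t₁)
        (conta.mono hsub₂) (f' := fun t => μ * ((a t + q) ^ 2 - ε₀))
      · intro x hx
        rw [interior_Icc] at hx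
        exact ((ha' x (hsub₂ (Ioo_subset_Icc_self hx))).hasDerivWithinAt)
      · intro x hx
        rw [interior_Icc] at hx
        have hgx : M ≤ a x := hge x (Ioo_subset_Icc_self hx)
        have hεa : ε ≤ a x + q := by simp only [hMdef] at hgx; linarith
        have h7 : ε ^ 2 ≤ (a x + q) ^ 2 := pow_le_pow_left₀ hε.le hεa 2
        rw [hε2] at h7
        exact mul_nonneg hμ0.le (sub_nonneg.2 h7)
    have := hmono ⟨le_rfl, ht₁0.le⟩ ⟨ht₁0.le, le_rfl⟩ ht₁0.le
    rw [ht₁M] at this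
    linarith
  -- uniform bound |a t| ≤ A
  have habs : ∀ t ∈ Icc (0:ℝ) T, |a t| ≤ A := by
    intro t ht
    rw [abs_le]
    constructor
    · have := hlow t ht; simp only [hAdef]; linarith
    · have := hup t ht; simp only [hAdef]; linarith
  -- Gronwall on reflected difference
  set G : ℝ → ℝ := fun s => a (T - s) - Pd (T - s) with hG
  have hmaps : ∀ s ∈ Icc (0:ℝ) T, T - s ∈ Icc (0:ℝ) T := by
    intro s hs; exact ⟨by linarith [hs.2], by linarith [hs.1]⟩
  have hcontG : ContinuousOn G (Icc 0 T) := by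
    have hcr : ContinuousOn (fun s : ℝ => T - s) (Icc 0 T) :=
      (continuous_const.sub continuous_id).continuousOn
    exact ((conta.comp hcr hmaps).sub (contPd.comp hcr hmaps))
  have hGderiv : ∀ s ∈ Ico (0:ℝ) T, HasDerivWithinAt G
      (-((μ * ((a (T - s) + q) ^ 2 - ε₀)) - ((Pd (T - s) + q) ^ 2 - ε₀))) (Ici s) s := by
    intro s hs
    have hts : T - s ∈ Icc (0:ℝ) T := hmaps s (Ico_subset_Icc_self hs)
    have h1 : HasDerivAt (fun u => a u - Pd u)
        ((μ * ((a (T - s) + q) ^ 2 - ε₀)) - ((Pd (T - s) + q) ^ 2 - ε₀)) (T - s) :=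
      (ha' _ hts).sub (hPd _ hts)
    exact (hasDerivAt_reflect h1).hasDerivWithinAt
  have hG0 : ‖G 0‖ ≤ (μ - 1) * c := by
    simp only [hG, sub_zero, haT, hPdT, Real.norm_eq_abs]
    rw [show μ * c - c = (μ - 1) * c by ring, abs_of_nonneg (by nlinarith)]
  have hbound : ∀ s ∈ Ico (0:ℝ) T,
      ‖-((μ * ((a (T - s) + q) ^ 2 - ε₀)) - ((Pd (T - s) + q) ^ 2 - ε₀))‖
        ≤ K * ‖G s‖ + (μ - 1) * B := by
    intro s hs
    have hts : T - s ∈ Icc (0:ℝ) T := hmaps s (Ico_subset_Icc_self hs)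
    set t := T - s
    have hid : (μ * ((a t + q) ^ 2 - ε₀)) - ((Pd t + q) ^ 2 - ε₀)
        = (a t + Pd t + 2 * q) * (a t - Pd t) + (μ - 1) * ((a t + q) ^ 2 - ε₀) := by ring
    rw [Real.norm_eq_abs, abs_neg, hid]
    have h1 : |a t| ≤ A := habs t hts
    have h2 : |Pd t| ≤ MP := hMP t hts
    have h3 : |a t + Pd t + 2 * q| ≤ K := by
      simp only [hKdef]
      calc |a t + Pd t + 2 * q| ≤ |a t| + |Pd t| + |2 * q| := by
            apply (abs_add_le _ _).trans; gcongr; exact abs_add_le _ _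
        _ ≤ A + MP + 2 * q := by
            rw [abs_of_nonneg (by positivity : (0:ℝ) ≤ 2 * q)]; gcongr
    have h4 : |(a t + q) ^ 2 - ε₀| ≤ B := by
      simp only [hBdef]
      have haq : |a t + q| ≤ A + q := (abs_add_le _ _).trans (by rw [abs_of_nonneg hq.le]; gcongr)
      have hsq : (a t + q) ^ 2 ≤ (A + q) ^ 2 := by
        rw [← sq_abs]; exact pow_le_pow_left₀ (abs_nonneg _) haq 2
      rw [abs_sub_comm, abs_le]
      constructor <;> nlinarith [sq_nonneg (a t + q)]
    calc |(a t + Pd t + 2 * q) * (a t - Pd t) + (μ - 1) * ((a t + q) ^ 2 - ε₀)|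
        ≤ |(a t + Pd t + 2 * q) * (a t - Pd t)| + |(μ - 1) * ((a t + q) ^ 2 - ε₀)| :=
          abs_add_le _ _
      _ = |a t + Pd t + 2 * q| * |a t - Pd t| + (μ - 1) * |(a t + q) ^ 2 - ε₀| := by
          rw [abs_mul, abs_mul, abs_of_nonneg (by linarith : (0:ℝ) ≤ μ - 1)]
      _ ≤ K * ‖G s‖ + (μ - 1) * B := by
          rw [Real.norm_eq_abs]
          have hGs : G s = a t - Pd t := rfl
          rw [hGs]
          have h5 : 0 ≤ |a t - Pd t| := abs_nonneg _
          have h6 : (0:ℝ) ≤ μ - 1 := by linarith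
          gcongr
  have hgron := norm_le_gronwallBound_of_norm_deriv_right_le hcontG hGderiv hG0 hbound
  intro t ht
  have hs : T - t ∈ Icc (0:ℝ) T := hmaps t ht
  have := hgron (T - t) hs
  have hGt : G (T - t) = a t - Pd t := by simp only [hG, sub_sub_cancel]
  rw [hGt, Real.norm_eq_abs, sub_zero] at this
  refine this.trans ?_
  rw [gronwallBound_of_K_ne_0 hK.ne']
  have hxle : Real.exp (K * (T - t)) ≤ Real.exp (K * T) := by
    apply Real.exp_le_exp.2
    have := ht.1
    nlinarith
  have hx1 : 1 ≤ Real.exp (K * (T - t)) := by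
    rw [← Real.exp_zero]
    apply Real.exp_le_exp.2
    have h1 := ht.2
    have : 0 ≤ T - t := by linarith
    positivity
  have h6 : (0:ℝ) ≤ μ - 1 := by linarith
  have hBK : 0 ≤ B / K := by positivity
  have key : (μ - 1) * c * Real.exp (K * (T - t)) + (μ - 1) * B / K * (Real.exp (K * (T - t)) - 1)
      ≤ (μ - 1) * CT := by
    simp only [hCTdef]
    have e1 : (μ - 1) * c * Real.exp (K * (T - t)) ≤ (μ - 1) * (c * Real.exp (K * T)) := by
      rw [mul_assoc]; gcongr
    have e2 : (μ - 1) * B / K * (Real.exp (K * (T - t)) - 1)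
        ≤ (μ - 1) * (B / K * (Real.exp (K * T) - 1)) := by
      rw [mul_div_assoc, mul_assoc]
      exact mul_le_mul_of_nonneg_left (mul_le_mul_of_nonneg_left (by linarith) hBK) h6
    linarith [e1, e2, mul_add (μ - 1) (c * Real.exp (K * T)) (B / K * (Real.exp (K * T) - 1))]
  exact key

set_option maxHeartbeats 1000000 in
/-- in the systemic risk model, let `(π₁, π₂)` solve the `N`-agent
Riccati system on `[0,T]` with the stated terminal conditions, and let `P_d`
solve the limiting Riccati equation `0 = Ṗ_d − (P_d+q)² + ε₀`, `P_d(T) = c`.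
Then `sup_{0≤t≤T} |π₁(t) − P_d(t)| = O(1/N)` and
`sup_{0≤t≤T} |(N−1)π₂(t) + P_d(t)| = O(1/N)` as `N → ∞`, i.e. both are bounded
by `C/N` for a constant `C` independent of `N`. -/
theorem riccati_asymptotics (T q ε₀ c : ℝ) (hT : 0 < T)
    (hq : 0 < q) (hε₀ : 0 < ε₀) (hc : 0 < c) (hqε : q ^ 2 ≤ ε₀)
    (Pd : ℝ → ℝ)
    (hPd : ∀ t ∈ Icc (0 : ℝ) T, HasDerivAt Pd ((Pd t + q) ^ 2 - ε₀) t)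
    (hPdT : Pd T = c) :
    ∃ C : ℝ, ∀ (N : ℕ), 2 ≤ N → ∀ π₁ π₂ : ℝ → ℝ,
      -- 0 = π̇₁ − (π₁+q)² − (π₂ − q/(N−1))²(N−1) + ε₀N/(N−1)
      (∀ t ∈ Icc (0 : ℝ) T, HasDerivAt π₁
        ((π₁ t + q) ^ 2 + (π₂ t - q / ((N : ℝ) - 1)) ^ 2 * ((N : ℝ) - 1)
          - ε₀ * (N : ℝ) / ((N : ℝ) - 1)) t) →
      π₁ T = c * (N : ℝ) / ((N : ℝ) - 1) →
      -- 0 = π̇₂ − 2(π₁+q)(π₂ − q/(N−1)) − (π₂ − q/(N−1))²(N−2) − ε₀N/(N−1)²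
      (∀ t ∈ Icc (0 : ℝ) T, HasDerivAt π₂
        (2 * (π₁ t + q) * (π₂ t - q / ((N : ℝ) - 1))
          + (π₂ t - q / ((N : ℝ) - 1)) ^ 2 * ((N : ℝ) - 2)
          + ε₀ * (N : ℝ) / ((N : ℝ) - 1) ^ 2) t) →
      π₂ T = -(c * (N : ℝ) / ((N : ℝ) - 1) ^ 2) →
      ∀ t ∈ Icc (0 : ℝ) T,
        |π₁ t - Pd t| ≤ C / (N : ℝ)
        ∧ |((N : ℝ) - 1) * π₂ t + Pd t| ≤ C / (N : ℝ) := by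
  obtain ⟨C0, hC0, hest⟩ := scalar_est T q ε₀ c hT hq hε₀ hc hqε Pd hPd hPdT
  refine ⟨2 * C0, ?_⟩
  intro N hN π₁ π₂ hπ₁ hπ₁T hπ₂ hπ₂T
  have hN2 : (2:ℝ) ≤ (N:ℝ) := by exact_mod_cast hN
  have hn0 : (0:ℝ) < (N:ℝ) - 1 := by linarith
  have hnne : ((N:ℝ) - 1) ≠ 0 := hn0.ne'
  have hNpos : (0:ℝ) < (N:ℝ) := by linarith
  -- the sum S = π₁ + (N-1) π₂ satisfies S' = S², S T = 0
  set S : ℝ → ℝ := fun t => π₁ t + ((N:ℝ) - 1) * π₂ t with hSdef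
  have hS' : ∀ t ∈ Icc (0:ℝ) T, HasDerivAt S ((S t) ^ 2) t := by
    intro t ht
    have h := (hπ₁ t ht).add ((hπ₂ t ht).const_mul ((N:ℝ) - 1))
    convert h using 1
    · rfl
    · rfl
    · rfl
    simp only [hSdef]
    field_simp
    ring
  have hST : S T = 0 := by
    show π₁ T + ((N:ℝ) - 1) * π₂ T = 0
    rw [hπ₁T, hπ₂T]
    field_simp
    ring
  have contS : ContinuousOn S (Icc 0 T) := fun t ht =>
    (hS' t ht).continuousAt.continuousWithinAt
  obtain ⟨y, hy, hR'⟩ := isCompact_Icc.exists_isMaxOn (nonempty_Icc.2 hT.le)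
    (continuous_abs.comp_continuousOn contS)
  have hR := isMaxOn_iff.mp hR'
  simp only [Function.comp_apply] at hR
  have hmaps : ∀ s ∈ Icc (0:ℝ) T, T - s ∈ Icc (0:ℝ) T := fun s hs =>
    ⟨by linarith [hs.2], by linarith [hs.1]⟩
  have hbd : ∀ s ∈ Ico (0:ℝ) T, |(fun s => -((S (T - s)) ^ 2)) s|
      ≤ |S y| * |(fun s => S (T - s)) s| := by
    intro s hs
    have hts : T - s ∈ Icc (0:ℝ) T := hmaps s (Ico_subset_Icc_self hs)
    simp only
    rw [abs_neg, sq, abs_mul]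
    exact mul_le_mul_of_nonneg_right (hR _ hts) (abs_nonneg _)
  have key := gronwall_zero (f := fun s => S (T - s)) (f' := fun s => -((S (T - s)) ^ 2))
    (a := 0) (b := T) (K := |S y|)
    (contS.comp ((continuous_const.sub continuous_id).continuousOn) hmaps)
    (fun s hs =>
      (hasDerivAt_reflect (hS' (T - s) (hmaps s (Ico_subset_Icc_self hs)))).hasDerivWithinAt)
    (by simpa using hST) hbd
  have hSzero : ∀ t ∈ Icc (0:ℝ) T, S t = 0 := by
    intro t ht
    have := key (T - t) (hmaps t ht)
    simpa [sub_sub_cancel] using this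
  -- reduced ODE for π₁
  set μ : ℝ := (N:ℝ) / ((N:ℝ) - 1) with hμdef
  have hμ1 : 1 < μ := by
    rw [hμdef, lt_div_iff₀ hn0]; linarith
  have hμ2 : μ ≤ 2 := by
    rw [hμdef, div_le_iff₀ hn0]; linarith
  have hared : ∀ t ∈ Icc (0:ℝ) T, HasDerivAt π₁ (μ * ((π₁ t + q) ^ 2 - ε₀)) t := by
    intro t ht
    have h := hπ₁ t ht
    have hb : π₂ t = -π₁ t / ((N:ℝ) - 1) := by
      have h0 := hSzero t ht
      simp only [hSdef] at h0
      field_simp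
      linarith
    rw [hb] at h
    convert h using 1
    rw [hμdef]
    field_simp
    ring
  have haT : π₁ T = μ * c := by rw [hπ₁T, hμdef]; ring
  have hest' := hest μ hμ1 hμ2 π₁ hared haT
  intro t ht
  have h1 : |π₁ t - Pd t| ≤ (μ - 1) * C0 := hest' t ht
  have heq : (μ - 1) * C0 = C0 / ((N:ℝ) - 1) := by
    rw [hμdef]; field_simp; ring
  have hfrac : C0 / ((N:ℝ) - 1) ≤ 2 * C0 / (N:ℝ) := by
    rw [div_le_div_iff₀ hn0 hNpos]
    nlinarith
  have hmain : |π₁ t - Pd t| ≤ 2 * C0 / (N:ℝ) := by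
    rw [heq] at h1; exact h1.trans hfrac
  refine ⟨hmain, ?_⟩
  have hrel : ((N:ℝ) - 1) * π₂ t = -π₁ t := by
    have h0 := hSzero t ht
    simp only [hSdef] at h0
    linarith
  rw [hrel]
  have : -π₁ t + Pd t = -(π₁ t - Pd t) := by ring
  rw [this, abs_neg]
  exact hmain
end

section
/- Let ψ : P₂(ℝⁿ) → ℝ have first and second linear functional (flat) derivatives δ_μψ(μ; y) and δ_{μμ}ψ(μ; y, z), jointly continuous in their arguments, satisfying for each K > 0 the growth bound |δ_μψ(μ;y)|, |δ_{μμ}ψ(μ;y,z)| ≤ C_K(1+|y|²+|z|²) whenever W₂(μ, δ₀) ≤ K. Then the semi-symmetry identity holds: δ_{μμ}ψ(μ; y, z) = δ_{μμ}ψ(μ; z, y) + δ_μψ(μ; y) − δ_μψ(μ; z) for all μ ∈ P₂(ℝⁿ) and y, z ∈ ℝⁿ. -/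
open MeasureTheory ENNReal

variable {n : ℕ}

/-- Membership in `P₂(ℝⁿ)`: Borel probability measures with finite second moment. -/
def MemP2 (μ : Measure (EuclideanSpace ℝ (Fin n))) : Prop :=
  IsProbabilityMeasure μ ∧ (∫⁻ y, (‖y‖₊ : ℝ≥0∞) ^ 2 ∂μ) < ⊤

/-- The convex combination `μ + s(ν − μ) = (1−s)μ + sν` of two measures. -/
noncomputable def mix (s : ℝ) (μ ν : Measure (EuclideanSpace ℝ (Fin n))) :
    Measure (EuclideanSpace ℝ (Fin n)) :=
  ENNReal.ofReal (1 - s) • μ + ENNReal.ofReal s • ν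

/-- The 2-Wasserstein distance, via couplings. -/
noncomputable def W2 (μ ν : Measure (EuclideanSpace ℝ (Fin n))) : ℝ≥0∞ :=
  (⨅ π : {π : Measure (EuclideanSpace ℝ (Fin n) × EuclideanSpace ℝ (Fin n)) //
        π.map Prod.fst = μ ∧ π.map Prod.snd = ν},
      ∫⁻ p, ENNReal.ofReal (dist p.1 p.2 ^ 2) ∂π.1) ^ (1 / 2 : ℝ)

/-- `Dψ` is the flat (linear functional) derivative of `ψ` on `P₂(ℝⁿ)`:
`ψ(ν) − ψ(μ) = ∫₀¹ ∫ Dψ(μ + s(ν−μ); y) (ν−μ)(dy) ds` for all `μ, ν ∈ P₂`,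
together with the normalization `∫ Dψ(μ; y) μ(dy) = 0`. -/
def IsFlatDeriv (ψ : Measure (EuclideanSpace ℝ (Fin n)) → ℝ)
    (Dψ : Measure (EuclideanSpace ℝ (Fin n)) → EuclideanSpace ℝ (Fin n) → ℝ) :
    Prop :=
  (∀ μ ν, MemP2 μ → MemP2 ν →
    ψ ν - ψ μ = ∫ s in (0 : ℝ)..1,
      ((∫ y, Dψ (mix s μ ν) y ∂ν) - (∫ y, Dψ (mix s μ ν) y ∂μ)))
  ∧ ∀ μ, MemP2 μ → (∫ y, Dψ μ y ∂μ) = 0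

/-- Joint continuity (w.r.t. the `W₂` metric in the measure argument) of a
function of `(μ, y)`. -/
def JointContW2₁
    (F : Measure (EuclideanSpace ℝ (Fin n)) → EuclideanSpace ℝ (Fin n) → ℝ) :
    Prop :=
  ∀ μ, MemP2 μ → ∀ y : EuclideanSpace ℝ (Fin n), ∀ ε > (0 : ℝ), ∃ δ > (0 : ℝ),
    ∀ ν, MemP2 ν → ∀ y' : EuclideanSpace ℝ (Fin n),
      W2 μ ν < ENNReal.ofReal δ → dist y y' < δ → |F ν y' - F μ y| < ε

/-- Joint continuity (w.r.t. the `W₂` metric in the measure argument) of a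
function of `(μ, y, z)`. -/
def JointContW2₂
    (F : Measure (EuclideanSpace ℝ (Fin n)) → EuclideanSpace ℝ (Fin n) →
      EuclideanSpace ℝ (Fin n) → ℝ) : Prop :=
  ∀ μ, MemP2 μ → ∀ y z : EuclideanSpace ℝ (Fin n), ∀ ε > (0 : ℝ), ∃ δ > (0 : ℝ),
    ∀ ν, MemP2 ν → ∀ y' z' : EuclideanSpace ℝ (Fin n),
      W2 μ ν < ENNReal.ofReal δ → dist y y' < δ → dist z z' < δ →
      |F ν y' z' - F μ y z| < ε


/-- The two-parameter mixture `(1-a-b)μ + a δ_y + b δ_z`. -/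
noncomputable def mmix (μ : Measure (EuclideanSpace ℝ (Fin n)))
    (y z : EuclideanSpace ℝ (Fin n)) (a b : ℝ) : Measure (EuclideanSpace ℝ (Fin n)) :=
  ENNReal.ofReal (1 - a - b) • μ +
    (ENNReal.ofReal a • Measure.dirac y + ENNReal.ofReal b • Measure.dirac z)

lemma mmix_zero_zero (μ : Measure (EuclideanSpace ℝ (Fin n))) (y z : EuclideanSpace ℝ (Fin n)) :
    mmix μ y z 0 0 = μ := by
  simp [mmix]

lemma mmix_swap (μ : Measure (EuclideanSpace ℝ (Fin n))) (y z : EuclideanSpace ℝ (Fin n))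
    (a b : ℝ) : mmix μ z y b a = mmix μ y z a b := by
  unfold mmix
  have : (1:ℝ) - b - a = 1 - a - b := by ring
  rw [this]
  abel

lemma isProb_mmix (μ : Measure (EuclideanSpace ℝ (Fin n))) [IsProbabilityMeasure μ]
    (y z : EuclideanSpace ℝ (Fin n)) {a b : ℝ} (ha : 0 ≤ a) (hb : 0 ≤ b) (hab : a + b ≤ 1) :
    IsProbabilityMeasure (mmix μ y z a b) := by
  constructor
  simp only [mmix, Measure.add_apply, Measure.smul_apply, smul_eq_mul]
  simp only [measure_univ, Measure.dirac_apply_of_mem (Set.mem_univ _), mul_one]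
  rw [← ENNReal.ofReal_add ha hb,
    ← ENNReal.ofReal_add (by linarith : (0:ℝ) ≤ 1 - a - b) (by linarith : (0:ℝ) ≤ a + b)]
  norm_num

lemma memP2_mmix {μ : Measure (EuclideanSpace ℝ (Fin n))} (hμ : MemP2 μ)
    (y z : EuclideanSpace ℝ (Fin n)) {a b : ℝ} (ha : 0 ≤ a) (hb : 0 ≤ b) (hab : a + b ≤ 1) :
    MemP2 (mmix μ y z a b) := by
  have : IsProbabilityMeasure μ := hμ.1
  refine ⟨isProb_mmix μ y z ha hb hab, ?_⟩
  simp only [mmix, lintegral_add_measure, lintegral_smul_measure, lintegral_dirac]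
  refine ENNReal.add_lt_top.2 ⟨?_, ENNReal.add_lt_top.2 ⟨?_, ?_⟩⟩
  · exact ENNReal.mul_lt_top ENNReal.ofReal_lt_top hμ.2
  · exact ENNReal.mul_lt_top ENNReal.ofReal_lt_top (by simp [ENNReal.pow_lt_top ENNReal.coe_lt_top])
  · exact ENNReal.mul_lt_top ENNReal.ofReal_lt_top (by simp [ENNReal.pow_lt_top ENNReal.coe_lt_top])

/-- mix along the first coordinate. -/
lemma mix_mmix_fst (μ : Measure (EuclideanSpace ℝ (Fin n))) (y z : EuclideanSpace ℝ (Fin n))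
    {r t v : ℝ} (hr : 0 ≤ r) (hr1 : r ≤ 1) (ht : 0 ≤ t) (hv : 0 ≤ v) (htv : t + v ≤ 1) :
    mix r (mmix μ y z 0 v) (mmix μ y z t v) = mmix μ y z (r * t) v := by
  unfold mix mmix
  simp only [smul_add, smul_smul]
  have e1 : ENNReal.ofReal (1 - r) * ENNReal.ofReal (1 - 0 - v) +
      ENNReal.ofReal r * ENNReal.ofReal (1 - t - v) = ENNReal.ofReal (1 - r * t - v) := by
    rw [← ENNReal.ofReal_mul (by linarith), ← ENNReal.ofReal_mul hr,
      ← ENNReal.ofReal_add (by nlinarith) (by nlinarith)]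
    congr 1; ring
  have e2 : ENNReal.ofReal (1 - r) * ENNReal.ofReal (0:ℝ) +
      ENNReal.ofReal r * ENNReal.ofReal t = ENNReal.ofReal (r * t) := by
    rw [ENNReal.ofReal_zero, mul_zero, zero_add, ← ENNReal.ofReal_mul hr]
  have e3 : ENNReal.ofReal (1 - r) * ENNReal.ofReal v +
      ENNReal.ofReal r * ENNReal.ofReal v = ENNReal.ofReal v := by
    rw [← ENNReal.ofReal_mul (by linarith), ← ENNReal.ofReal_mul hr,
      ← ENNReal.ofReal_add (by nlinarith) (by nlinarith)]
    congr 1; ring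
  conv_rhs => rw [← e1, ← e2, ← e3, add_smul, add_smul, add_smul]
  abel

/-- mix along the second coordinate. -/
lemma mix_mmix_snd (μ : Measure (EuclideanSpace ℝ (Fin n))) (y z : EuclideanSpace ℝ (Fin n))
    {u t s : ℝ} (hu : 0 ≤ u) (hu1 : u ≤ 1) (ht : 0 ≤ t) (hs : 0 ≤ s) (hts : t + s ≤ 1) :
    mix u (mmix μ y z t 0) (mmix μ y z t s) = mmix μ y z t (u * s) := by
  unfold mix mmix
  simp only [smul_add, smul_smul]
  have e1 : ENNReal.ofReal (1 - u) * ENNReal.ofReal (1 - t - 0) +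
      ENNReal.ofReal u * ENNReal.ofReal (1 - t - s) = ENNReal.ofReal (1 - t - u * s) := by
    rw [← ENNReal.ofReal_mul (by linarith), ← ENNReal.ofReal_mul hu,
      ← ENNReal.ofReal_add (by nlinarith) (by nlinarith)]
    congr 1; ring
  have e2 : ENNReal.ofReal (1 - u) * ENNReal.ofReal t +
      ENNReal.ofReal u * ENNReal.ofReal t = ENNReal.ofReal t := by
    rw [← ENNReal.ofReal_mul (by linarith), ← ENNReal.ofReal_mul hu,
      ← ENNReal.ofReal_add (by nlinarith) (by nlinarith)]
    congr 1; ring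
  have e3 : ENNReal.ofReal (1 - u) * ENNReal.ofReal (0:ℝ) +
      ENNReal.ofReal u * ENNReal.ofReal s = ENNReal.ofReal (u * s) := by
    rw [ENNReal.ofReal_zero, mul_zero, zero_add, ← ENNReal.ofReal_mul hu]
  conv_rhs => rw [← e1, ← e2, ← e3, add_smul, add_smul, add_smul]
  abel

lemma integrable_normSq {μ : Measure (EuclideanSpace ℝ (Fin n))} (hμ : MemP2 μ) :
    Integrable (fun w : EuclideanSpace ℝ (Fin n) => ‖w‖ ^ 2) μ := by
  refine ⟨(continuous_norm.pow 2).aestronglyMeasurable, ?_⟩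
  rw [HasFiniteIntegral]
  calc ∫⁻ w, ‖‖w‖ ^ 2‖₊ ∂μ = ∫⁻ w, (‖w‖₊ : ℝ≥0∞) ^ 2 ∂μ := by
        refine lintegral_congr fun w => ?_
        norm_cast
        simp [nnnorm_pow, nnnorm_norm]
    _ < ⊤ := hμ.2

lemma integrable_of_growth {μ : Measure (EuclideanSpace ℝ (Fin n))} (hμ : MemP2 μ)
    {g : EuclideanSpace ℝ (Fin n) → ℝ} {c : ℝ} (hg : Continuous g)
    (hb : ∀ w, |g w| ≤ c * (1 + ‖w‖ ^ 2)) : Integrable g μ := by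
  have : IsProbabilityMeasure μ := hμ.1
  have hint : Integrable (fun w : EuclideanSpace ℝ (Fin n) => c * (1 + ‖w‖ ^ 2)) μ :=
    ((integrable_const 1).add (integrable_normSq hμ)).const_mul c
  refine hint.mono hg.aestronglyMeasurable (Filter.Eventually.of_forall fun w => ?_)
  have h1 : (0:ℝ) ≤ 1 + ‖w‖ ^ 2 := by positivity
  have := hb w
  rw [Real.norm_eq_abs, Real.norm_eq_abs]
  exact le_trans this (le_abs_self _)

lemma integrable_dirac' {g : EuclideanSpace ℝ (Fin n) → ℝ} (hg : Continuous g)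
    (p : EuclideanSpace ℝ (Fin n)) : Integrable g (Measure.dirac p) := by
  refine ⟨hg.aestronglyMeasurable, ?_⟩
  rw [HasFiniteIntegral, lintegral_dirac]
  exact ENNReal.coe_lt_top

lemma integral_mmix {μ : Measure (EuclideanSpace ℝ (Fin n))} (hμ : MemP2 μ)
    (y z : EuclideanSpace ℝ (Fin n)) {a b : ℝ} (ha : 0 ≤ a) (hb : 0 ≤ b) (hab : a + b ≤ 1)
    {g : EuclideanSpace ℝ (Fin n) → ℝ} (hg : Continuous g) (hInt : Integrable g μ) :
    ∫ x, g x ∂(mmix μ y z a b) = (1 - a - b) * ∫ x, g x ∂μ + a * g y + b * g z := by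
  rw [mmix, integral_add_measure (hInt.smul_measure ENNReal.ofReal_ne_top)
      (((integrable_dirac' hg y).smul_measure ENNReal.ofReal_ne_top).add_measure
        ((integrable_dirac' hg z).smul_measure ENNReal.ofReal_ne_top)),
    integral_add_measure ((integrable_dirac' hg y).smul_measure ENNReal.ofReal_ne_top)
      ((integrable_dirac' hg z).smul_measure ENNReal.ofReal_ne_top),
    integral_smul_measure, integral_smul_measure, integral_smul_measure,
    integral_dirac, integral_dirac,
    ENNReal.toReal_ofReal (by linarith), ENNReal.toReal_ofReal ha, ENNReal.toReal_ofReal hb]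
  simp [smul_eq_mul]
  ring

lemma measurable_costFn :
    Measurable (fun p : EuclideanSpace ℝ (Fin n) × EuclideanSpace ℝ (Fin n) =>
      ENNReal.ofReal (dist p.1 p.2 ^ 2)) :=
  (ENNReal.continuous_ofReal.comp ((continuous_fst.dist continuous_snd).pow 2)).measurable

lemma W2_le_coupling {ρ σ : Measure (EuclideanSpace ℝ (Fin n))}
    (π : Measure (EuclideanSpace ℝ (Fin n) × EuclideanSpace ℝ (Fin n)))
    (h1 : π.map Prod.fst = ρ) (h2 : π.map Prod.snd = σ) :
    W2 ρ σ ≤ (∫⁻ p, ENNReal.ofReal (dist p.1 p.2 ^ 2) ∂π) ^ (1/2 : ℝ) := by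
  refine ENNReal.rpow_le_rpow ?_ (by norm_num)
  exact iInf_le (fun π' : {π' : Measure (EuclideanSpace ℝ (Fin n) × EuclideanSpace ℝ (Fin n)) //
        π'.map Prod.fst = ρ ∧ π'.map Prod.snd = σ} =>
      ∫⁻ p, ENNReal.ofReal (dist p.1 p.2 ^ 2) ∂π'.1) ⟨π, h1, h2⟩

lemma W2_self {ρ : Measure (EuclideanSpace ℝ (Fin n))} [SFinite ρ] : W2 ρ ρ = 0 := by
  have hdiag : Measurable (fun x : EuclideanSpace ℝ (Fin n) => (x, x)) :=
    measurable_id.prodMk measurable_id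
  have h1 : (ρ.map (fun x => (x, x))).map Prod.fst = ρ := by
    rw [Measure.map_map measurable_fst hdiag]; simp [Function.comp_def]
  have h2 : (ρ.map (fun x => (x, x))).map Prod.snd = ρ := by
    rw [Measure.map_map measurable_snd hdiag]; simp [Function.comp_def]
  have hc : (∫⁻ p, ENNReal.ofReal (dist p.1 p.2 ^ 2) ∂(ρ.map (fun x => (x, x)))) = 0 := by
    rw [lintegral_map measurable_costFn hdiag]
    simp
  have := W2_le_coupling (ρ.map (fun x => (x, x))) h1 h2
  rw [hc] at this
  simpa [ENNReal.zero_rpow_of_pos (by norm_num : (0:ℝ) < 1/2)] using this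

lemma W2_swap_le {ρ σ : Measure (EuclideanSpace ℝ (Fin n))} : W2 ρ σ ≤ W2 σ ρ := by
  unfold W2
  refine ENNReal.rpow_le_rpow ?_ (by norm_num)
  refine le_iInf fun π => ?_
  have hswap : Measurable (Prod.swap : (EuclideanSpace ℝ (Fin n) × EuclideanSpace ℝ (Fin n)) →
      (EuclideanSpace ℝ (Fin n) × EuclideanSpace ℝ (Fin n))) := measurable_swap
  have h1 : (π.1.map Prod.swap).map Prod.fst = ρ := by
    rw [Measure.map_map measurable_fst hswap]
    have : (Prod.fst ∘ Prod.swap : (EuclideanSpace ℝ (Fin n) × EuclideanSpace ℝ (Fin n)) → _)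
        = Prod.snd := rfl
    rw [this, π.2.2]
  have h2 : (π.1.map Prod.swap).map Prod.snd = σ := by
    rw [Measure.map_map measurable_snd hswap]
    have : (Prod.snd ∘ Prod.swap : (EuclideanSpace ℝ (Fin n) × EuclideanSpace ℝ (Fin n)) → _)
        = Prod.fst := rfl
    rw [this, π.2.1]
  refine iInf_le_of_le ⟨π.1.map Prod.swap, h1, h2⟩ ?_
  rw [lintegral_map measurable_costFn hswap]
  refine le_of_eq (lintegral_congr fun q => ?_)
  simp [dist_comm]

lemma W2_comm (ρ σ : Measure (EuclideanSpace ℝ (Fin n))) : W2 ρ σ = W2 σ ρ :=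
  le_antisymm W2_swap_le W2_swap_le

section W2mmix

variable {μ : Measure (EuclideanSpace ℝ (Fin n))} {y z : EuclideanSpace ℝ (Fin n)}

/-- transport cost to a point -/
noncomputable def tcost (μ : Measure (EuclideanSpace ℝ (Fin n)))
    (p : EuclideanSpace ℝ (Fin n)) : ℝ≥0∞ :=
  ∫⁻ x, ENNReal.ofReal (dist x p ^ 2) ∂μ

lemma tcost_lt_top (hμ : MemP2 μ) (p : EuclideanSpace ℝ (Fin n)) : tcost μ p < ⊤ := by
  have : IsProbabilityMeasure μ := hμ.1
  have hle : ∀ x : EuclideanSpace ℝ (Fin n), ENNReal.ofReal (dist x p ^ 2) ≤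
      ENNReal.ofReal 2 * (‖x‖₊ : ℝ≥0∞) ^ 2 + ENNReal.ofReal (2 * ‖p‖ ^ 2) := by
    intro x
    have h1 : dist x p ^ 2 ≤ 2 * ‖x‖ ^ 2 + 2 * ‖p‖ ^ 2 := by
      have := dist_le_norm_add_norm x p
      nlinarith [dist_nonneg (x := x) (y := p), sq_nonneg (‖x‖ - ‖p‖), norm_nonneg x, norm_nonneg p]
    calc ENNReal.ofReal (dist x p ^ 2) ≤ ENNReal.ofReal (2 * ‖x‖ ^ 2 + 2 * ‖p‖ ^ 2) :=
          ENNReal.ofReal_le_ofReal h1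
      _ = ENNReal.ofReal (2 * ‖x‖ ^ 2) + ENNReal.ofReal (2 * ‖p‖ ^ 2) := by
          rw [ENNReal.ofReal_add (by positivity) (by positivity)]
      _ ≤ ENNReal.ofReal 2 * (‖x‖₊ : ℝ≥0∞) ^ 2 + ENNReal.ofReal (2 * ‖p‖ ^ 2) := by
          rw [ENNReal.ofReal_mul (by norm_num), ENNReal.ofReal_pow (norm_nonneg x),
            ofReal_norm, enorm_eq_nnnorm]
  calc tcost μ p ≤ ∫⁻ x, (ENNReal.ofReal 2 * (‖x‖₊ : ℝ≥0∞) ^ 2 + ENNReal.ofReal (2 * ‖p‖ ^ 2)) ∂μ :=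
        lintegral_mono hle
    _ = ENNReal.ofReal 2 * (∫⁻ x, (‖x‖₊ : ℝ≥0∞) ^ 2 ∂μ) + ENNReal.ofReal (2 * ‖p‖ ^ 2) * μ Set.univ := by
        rw [lintegral_add_right _ measurable_const, lintegral_const,
          lintegral_const_mul' _ _ ENNReal.ofReal_ne_top]
    _ < ⊤ := by
        rw [measure_univ, mul_one]
        exact ENNReal.add_lt_top.2 ⟨ENNReal.mul_lt_top ENNReal.ofReal_lt_top hμ.2,
          ENNReal.ofReal_lt_top⟩

lemma W2_mmix_case1 (hμ : IsProbabilityMeasure μ) {a b a' b' : ℝ}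
    (ha : 0 ≤ a) (hb : 0 ≤ b) (haa : a ≤ a') (hbb : b ≤ b') (hab' : a' + b' ≤ 1) :
    W2 (mmix μ y z a b) (mmix μ y z a' b') ≤
      (ENNReal.ofReal ((a' - a) + (b' - b)) * (tcost μ y ⊔ tcost μ z)) ^ (1/2 : ℝ) := by
  set π : Measure (EuclideanSpace ℝ (Fin n) × EuclideanSpace ℝ (Fin n)) :=
    ENNReal.ofReal (1 - a' - b') • μ.map (fun x => (x, x)) +
      (ENNReal.ofReal a • Measure.dirac (y, y) + ENNReal.ofReal b • Measure.dirac (z, z)) +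
      (ENNReal.ofReal (a' - a) • μ.map (fun x => (x, y)) +
        ENNReal.ofReal (b' - b) • μ.map (fun x => (x, z))) with hπ
  have hdiag : Measurable (fun x : EuclideanSpace ℝ (Fin n) => (x, x)) :=
    measurable_id.prodMk measurable_id
  have hmy : Measurable (fun x : EuclideanSpace ℝ (Fin n) => (x, y)) :=
    measurable_id.prodMk measurable_const
  have hmz : Measurable (fun x : EuclideanSpace ℝ (Fin n) => (x, z)) :=
    measurable_id.prodMk measurable_const
  have h1 : π.map Prod.fst = mmix μ y z a b := by
    rw [hπ]
    simp only [Measure.map_add _ _ measurable_fst, Measure.map_smul,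
      Measure.map_map measurable_fst hdiag, Measure.map_map measurable_fst hmy,
      Measure.map_map measurable_fst hmz, Measure.map_dirac' measurable_fst]
    have hid : ∀ p : EuclideanSpace ℝ (Fin n),
        (Prod.fst ∘ (fun x : EuclideanSpace ℝ (Fin n) => (x, p))) = id := fun _ => rfl
    have hid2 : (Prod.fst ∘ (fun x : EuclideanSpace ℝ (Fin n) => (x, x))) = id := rfl
    rw [hid y, hid z, hid2, Measure.map_id]
    have key : ENNReal.ofReal (1 - a' - b') + (ENNReal.ofReal (a' - a) + ENNReal.ofReal (b' - b))
        = ENNReal.ofReal (1 - a - b) := by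
      rw [← ENNReal.ofReal_add (by linarith) (by linarith),
        ← ENNReal.ofReal_add (by linarith) (by linarith)]
      congr 1; ring
    rw [mmix, ← key, add_smul, add_smul]
    abel
  have h2 : π.map Prod.snd = mmix μ y z a' b' := by
    rw [hπ]
    simp only [Measure.map_add _ _ measurable_snd, Measure.map_smul,
      Measure.map_map measurable_snd hdiag, Measure.map_map measurable_snd hmy,
      Measure.map_map measurable_snd hmz, Measure.map_dirac' measurable_snd]
    have hidy : (Prod.snd ∘ (fun x : EuclideanSpace ℝ (Fin n) => (x, y))) = (fun _ => y) := rfl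
    have hidz : (Prod.snd ∘ (fun x : EuclideanSpace ℝ (Fin n) => (x, z))) = (fun _ => z) := rfl
    have hid2 : (Prod.snd ∘ (fun x : EuclideanSpace ℝ (Fin n) => (x, x))) = id := rfl
    rw [hidy, hidz, hid2, Measure.map_id, Measure.map_const, Measure.map_const, measure_univ,
      one_smul, one_smul]
    have key : ENNReal.ofReal a + ENNReal.ofReal (a' - a) = ENNReal.ofReal a' := by
      rw [← ENNReal.ofReal_add ha (by linarith)]; congr 1; ring
    have key2 : ENNReal.ofReal b + ENNReal.ofReal (b' - b) = ENNReal.ofReal b' := by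
      rw [← ENNReal.ofReal_add hb (by linarith)]; congr 1; ring
    rw [mmix, ← key, ← key2, add_smul, add_smul]
    abel
  refine le_trans (W2_le_coupling π h1 h2) (ENNReal.rpow_le_rpow ?_ (by norm_num))
  have hcost : (∫⁻ p, ENNReal.ofReal (dist p.1 p.2 ^ 2) ∂π) =
      ENNReal.ofReal (a' - a) * tcost μ y + ENNReal.ofReal (b' - b) * tcost μ z := by
    rw [hπ]
    simp only [lintegral_add_measure, lintegral_smul_measure,
      lintegral_map measurable_costFn hdiag, lintegral_map measurable_costFn hmy,
      lintegral_map measurable_costFn hmz, lintegral_dirac]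
    simp [tcost]
  rw [hcost]
  calc ENNReal.ofReal (a' - a) * tcost μ y + ENNReal.ofReal (b' - b) * tcost μ z
      ≤ ENNReal.ofReal (a' - a) * (tcost μ y ⊔ tcost μ z) +
        ENNReal.ofReal (b' - b) * (tcost μ y ⊔ tcost μ z) :=
        add_le_add (mul_le_mul_right le_sup_left _) (mul_le_mul_right le_sup_right _)
    _ = ENNReal.ofReal ((a' - a) + (b' - b)) * (tcost μ y ⊔ tcost μ z) := by
        rw [← add_mul, ← ENNReal.ofReal_add (by linarith) (by linarith)]

end W2mmix

section W2mmix2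

variable {μ : Measure (EuclideanSpace ℝ (Fin n))} {y z : EuclideanSpace ℝ (Fin n)}

lemma W2_mmix_case2 (hμ : IsProbabilityMeasure μ) {a b a' b' : ℝ}
    (ha : 0 ≤ a) (hb' : 0 ≤ b') (haa : a ≤ a') (hbb : b' ≤ b) (hab : a' + b ≤ 1) :
    W2 (mmix μ y z a b) (mmix μ y z a' b') ≤
      (ENNReal.ofReal ((a' - a) + (b - b')) * (tcost μ y ⊔ tcost μ z)) ^ (1/2 : ℝ) := by
  set π : Measure (EuclideanSpace ℝ (Fin n) × EuclideanSpace ℝ (Fin n)) :=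
    ENNReal.ofReal (1 - a' - b) • μ.map (fun x => (x, x)) +
      (ENNReal.ofReal a • Measure.dirac (y, y) + ENNReal.ofReal b' • Measure.dirac (z, z)) +
      (ENNReal.ofReal (a' - a) • μ.map (fun x => (x, y)) +
        ENNReal.ofReal (b - b') • μ.map (fun x => (z, x))) with hπ
  have hdiag : Measurable (fun x : EuclideanSpace ℝ (Fin n) => (x, x)) :=
    measurable_id.prodMk measurable_id
  have hmy : Measurable (fun x : EuclideanSpace ℝ (Fin n) => (x, y)) :=
    measurable_id.prodMk measurable_const
  have hmz : Measurable (fun x : EuclideanSpace ℝ (Fin n) => ((z : EuclideanSpace ℝ (Fin n)), x)) :=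
    measurable_const.prodMk measurable_id
  have h1 : π.map Prod.fst = mmix μ y z a b := by
    rw [hπ]
    simp only [Measure.map_add _ _ measurable_fst, Measure.map_smul,
      Measure.map_map measurable_fst hdiag, Measure.map_map measurable_fst hmy,
      Measure.map_map measurable_fst hmz, Measure.map_dirac' measurable_fst]
    have hidy : (Prod.fst ∘ (fun x : EuclideanSpace ℝ (Fin n) => (x, y))) = id := rfl
    have hidz : (Prod.fst ∘ (fun x : EuclideanSpace ℝ (Fin n) => (z, x))) = (fun _ => z) := rfl
    have hid2 : (Prod.fst ∘ (fun x : EuclideanSpace ℝ (Fin n) => (x, x))) = id := rfl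
    rw [hidy, hidz, hid2, Measure.map_id, Measure.map_const, measure_univ, one_smul]
    have key : ENNReal.ofReal (1 - a' - b) + ENNReal.ofReal (a' - a) = ENNReal.ofReal (1 - a - b) := by
      rw [← ENNReal.ofReal_add (by linarith) (by linarith)]; congr 1; ring
    have key2 : ENNReal.ofReal b' + ENNReal.ofReal (b - b') = ENNReal.ofReal b := by
      rw [← ENNReal.ofReal_add hb' (by linarith)]; congr 1; ring
    rw [mmix, ← key, ← key2, add_smul, add_smul]
    abel
  have h2 : π.map Prod.snd = mmix μ y z a' b' := by
    rw [hπ]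
    simp only [Measure.map_add _ _ measurable_snd, Measure.map_smul,
      Measure.map_map measurable_snd hdiag, Measure.map_map measurable_snd hmy,
      Measure.map_map measurable_snd hmz, Measure.map_dirac' measurable_snd]
    have hidy : (Prod.snd ∘ (fun x : EuclideanSpace ℝ (Fin n) => (x, y))) = (fun _ => y) := rfl
    have hidz : (Prod.snd ∘ (fun x : EuclideanSpace ℝ (Fin n) => (z, x))) = id := rfl
    have hid2 : (Prod.snd ∘ (fun x : EuclideanSpace ℝ (Fin n) => (x, x))) = id := rfl
    rw [hidy, hidz, hid2, Measure.map_id, Measure.map_const, measure_univ, one_smul]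
    have key : ENNReal.ofReal (1 - a' - b) + ENNReal.ofReal (b - b') = ENNReal.ofReal (1 - a' - b') := by
      rw [← ENNReal.ofReal_add (by linarith) (by linarith)]; congr 1; ring
    have key2 : ENNReal.ofReal a + ENNReal.ofReal (a' - a) = ENNReal.ofReal a' := by
      rw [← ENNReal.ofReal_add ha (by linarith)]; congr 1; ring
    rw [mmix, ← key, ← key2, add_smul, add_smul]
    abel
  refine le_trans (W2_le_coupling π h1 h2) (ENNReal.rpow_le_rpow ?_ (by norm_num))
  have hcost : (∫⁻ p, ENNReal.ofReal (dist p.1 p.2 ^ 2) ∂π) =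
      ENNReal.ofReal (a' - a) * tcost μ y + ENNReal.ofReal (b - b') * tcost μ z := by
    rw [hπ]
    simp only [lintegral_add_measure, lintegral_smul_measure,
      lintegral_map measurable_costFn hdiag, lintegral_map measurable_costFn hmy,
      lintegral_map measurable_costFn hmz, lintegral_dirac]
    simp [tcost, dist_comm]
  rw [hcost]
  calc ENNReal.ofReal (a' - a) * tcost μ y + ENNReal.ofReal (b - b') * tcost μ z
      ≤ ENNReal.ofReal (a' - a) * (tcost μ y ⊔ tcost μ z) +
        ENNReal.ofReal (b - b') * (tcost μ y ⊔ tcost μ z) :=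
        add_le_add (mul_le_mul_right le_sup_left _) (mul_le_mul_right le_sup_right _)
    _ = ENNReal.ofReal ((a' - a) + (b - b')) * (tcost μ y ⊔ tcost μ z) := by
        rw [← add_mul, ← ENNReal.ofReal_add (by linarith) (by linarith)]

lemma W2_mmix_le (hμ : IsProbabilityMeasure μ) {a b a' b' : ℝ}
    (ha : 0 ≤ a) (hb : 0 ≤ b) (ha' : 0 ≤ a') (hb' : 0 ≤ b')
    (hab : a + b ≤ 1/2) (hab' : a' + b' ≤ 1/2) :
    W2 (mmix μ y z a b) (mmix μ y z a' b') ≤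
      (ENNReal.ofReal (|a' - a| + |b' - b|) * (tcost μ y ⊔ tcost μ z)) ^ (1/2 : ℝ) := by
  rcases le_total a a' with haa | haa <;> rcases le_total b b' with hbb | hbb
  · rw [abs_of_nonneg (by linarith), abs_of_nonneg (by linarith)]
    exact W2_mmix_case1 hμ ha hb haa hbb (by linarith)
  · rw [abs_of_nonneg (by linarith), abs_of_nonpos (by linarith)]
    have := W2_mmix_case2 (y := y) (z := z) hμ ha hb' haa hbb (by linarith)
    convert this using 4
    ring
  · rw [abs_of_nonpos (by linarith), abs_of_nonneg (by linarith)]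
    rw [W2_comm]
    have := W2_mmix_case2 (y := y) (z := z) hμ ha' hb haa hbb (by linarith)
    convert this using 4 <;> ring
  · rw [abs_of_nonpos (by linarith), abs_of_nonpos (by linarith)]
    rw [W2_comm]
    have := W2_mmix_case1 (y := y) (z := z) hμ ha' hb' haa hbb (by linarith)
    convert this using 4 <;> ring

end W2mmix2

section W2small

variable {μ : Measure (EuclideanSpace ℝ (Fin n))} {y z : EuclideanSpace ℝ (Fin n)}

lemma rpow_ofReal_sq {δ : ℝ} (hδ : 0 < δ) : (ENNReal.ofReal (δ ^ 2)) ^ (1/2 : ℝ) = ENNReal.ofReal δ := by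
  rw [ENNReal.ofReal_pow hδ.le, ← ENNReal.rpow_natCast, ← ENNReal.rpow_mul]
  norm_num

lemma W2_mmix_small (hμ : MemP2 μ) {δ : ℝ} (hδ : 0 < δ) :
    ∃ η > (0:ℝ), ∀ a b a' b' : ℝ, 0 ≤ a → 0 ≤ b → 0 ≤ a' → 0 ≤ b' →
      a + b ≤ 1/2 → a' + b' ≤ 1/2 → |a' - a| + |b' - b| < η →
      W2 (mmix μ y z a b) (mmix μ y z a' b') < ENNReal.ofReal δ := by
  have hprob : IsProbabilityMeasure μ := hμ.1
  set CW := tcost μ y ⊔ tcost μ z with hCW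
  have hCWfin : CW ≠ ⊤ := by
    rw [hCW]
    exact (max_lt (tcost_lt_top hμ y) (tcost_lt_top hμ z)).ne
  set M := CW.toReal + 1 with hM
  have hMpos : 0 < M := by positivity
  refine ⟨δ^2 / (2*M), by positivity, fun a b a' b' ha hb ha' hb' hab hab' hL => ?_⟩
  have hL0 : 0 ≤ |a' - a| + |b' - b| := by positivity
  refine lt_of_le_of_lt (W2_mmix_le hprob ha hb ha' hb' hab hab') ?_
  have h1 : ENNReal.ofReal (|a' - a| + |b' - b|) * CW ≤ ENNReal.ofReal ((|a' - a| + |b' - b|) * M) := by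
    rw [ENNReal.ofReal_mul hL0]
    refine mul_le_mul_right ?_ _
    rw [← ENNReal.ofReal_toReal hCWfin]
    exact ENNReal.ofReal_le_ofReal (by linarith)
  have h2 : (|a' - a| + |b' - b|) * M < δ ^ 2 := by
    calc (|a' - a| + |b' - b|) * M < (δ^2/(2*M)) * M := by
          exact mul_lt_mul_of_pos_right hL hMpos
      _ = δ^2/2 := by field_simp
      _ < δ^2 := by nlinarith
  calc (ENNReal.ofReal (|a' - a| + |b' - b|) * CW) ^ (1/2:ℝ)
      ≤ (ENNReal.ofReal ((|a' - a| + |b' - b|) * M)) ^ (1/2:ℝ) :=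
        ENNReal.rpow_le_rpow h1 (by norm_num)
    _ < (ENNReal.ofReal (δ^2)) ^ (1/2:ℝ) := by
        refine ENNReal.rpow_lt_rpow ?_ (by norm_num)
        exact (ENNReal.ofReal_lt_ofReal_iff (by positivity)).2 h2
    _ = ENNReal.ofReal δ := rpow_ofReal_sq hδ

lemma W2_mmix_dirac0 (hμ : MemP2 μ) (y z : EuclideanSpace ℝ (Fin n)) :
    ∃ K > (0:ℝ), ∀ a b : ℝ, 0 ≤ a → 0 ≤ b → a + b ≤ 1 →
      W2 (mmix μ y z a b) (Measure.dirac 0) ≤ ENNReal.ofReal K := by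
  have hprob : IsProbabilityMeasure μ := hμ.1
  set Mtot := tcost μ 0 + (ENNReal.ofReal (dist y 0 ^ 2) + ENNReal.ofReal (dist z 0 ^ 2)) with hMtot
  have hMfin : Mtot ≠ ⊤ := by
    rw [hMtot]
    exact (ENNReal.add_lt_top.2 ⟨tcost_lt_top hμ 0,
      ENNReal.add_lt_top.2 ⟨ENNReal.ofReal_lt_top, ENNReal.ofReal_lt_top⟩⟩).ne
  set K := (Mtot ^ (1/2:ℝ)).toReal + 1 with hK
  refine ⟨K, by positivity, fun a b ha hb hab => ?_⟩
  haveI := isProb_mmix μ y z ha hb hab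
  have hdiag : Measurable (fun x : EuclideanSpace ℝ (Fin n) =>
      (x, (0 : EuclideanSpace ℝ (Fin n)))) := measurable_id.prodMk measurable_const
  have h1 : ((mmix μ y z a b).map (fun x => (x, (0:EuclideanSpace ℝ (Fin n))))).map Prod.fst
      = mmix μ y z a b := by
    rw [Measure.map_map measurable_fst hdiag]
    have : (Prod.fst ∘ (fun x : EuclideanSpace ℝ (Fin n) => (x, (0:EuclideanSpace ℝ (Fin n)))))
        = id := rfl
    rw [this, Measure.map_id]
  have h2 : ((mmix μ y z a b).map (fun x => (x, (0:EuclideanSpace ℝ (Fin n))))).map Prod.snd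
      = Measure.dirac 0 := by
    rw [Measure.map_map measurable_snd hdiag]
    have : (Prod.snd ∘ (fun x : EuclideanSpace ℝ (Fin n) => (x, (0:EuclideanSpace ℝ (Fin n)))))
        = (fun _ => (0:EuclideanSpace ℝ (Fin n))) := rfl
    rw [this, Measure.map_const, measure_univ, one_smul]
  refine le_trans (W2_le_coupling _ h1 h2) ?_
  have hcost : (∫⁻ p, ENNReal.ofReal (dist p.1 p.2 ^ 2)
      ∂((mmix μ y z a b).map (fun x => (x, (0:EuclideanSpace ℝ (Fin n)))))) ≤ Mtot := by
    rw [lintegral_map measurable_costFn hdiag]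
    have : (∫⁻ x, ENNReal.ofReal (dist x (0:EuclideanSpace ℝ (Fin n)) ^ 2) ∂(mmix μ y z a b))
        = ENNReal.ofReal (1-a-b) * tcost μ 0 + (ENNReal.ofReal a * ENNReal.ofReal (dist y 0 ^ 2) +
          ENNReal.ofReal b * ENNReal.ofReal (dist z 0 ^ 2)) := by
      rw [mmix, lintegral_add_measure, lintegral_add_measure, lintegral_smul_measure,
        lintegral_smul_measure, lintegral_smul_measure, lintegral_dirac, lintegral_dirac]
      rfl
    rw [this, hMtot]
    refine add_le_add (mul_le_of_le_one_left zero_le (ENNReal.ofReal_le_one.2 (by linarith)))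
      (add_le_add (mul_le_of_le_one_left zero_le (ENNReal.ofReal_le_one.2 (by linarith)))
        (mul_le_of_le_one_left zero_le (ENNReal.ofReal_le_one.2 (by linarith))))
  refine le_trans (ENNReal.rpow_le_rpow hcost (by norm_num)) ?_
  have hfin : Mtot ^ (1/2:ℝ) ≠ ⊤ :=
    (ENNReal.rpow_lt_top_of_nonneg (by norm_num) hMfin).ne
  rw [← ENNReal.ofReal_toReal hfin]
  exact ENNReal.ofReal_le_ofReal (by rw [hK]; linarith)

end W2small

section Expansion

variable {μ : Measure (EuclideanSpace ℝ (Fin n))} {y z : EuclideanSpace ℝ (Fin n)}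

lemma continuous_in_point {DF : Measure (EuclideanSpace ℝ (Fin n)) → EuclideanSpace ℝ (Fin n) → ℝ}
    (hc : ∀ ρ, MemP2 ρ → ∀ w : EuclideanSpace ℝ (Fin n), ∀ ε > (0:ℝ), ∃ δ > (0:ℝ),
      ∀ ν, MemP2 ν → ∀ w' : EuclideanSpace ℝ (Fin n),
        W2 ρ ν < ENNReal.ofReal δ → dist w w' < δ → |DF ν w' - DF ρ w| < ε)
    {ρ : Measure (EuclideanSpace ℝ (Fin n))} (hρ : MemP2 ρ) :
    Continuous (fun w => DF ρ w) := by
  haveI : IsProbabilityMeasure ρ := hρ.1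
  rw [Metric.continuous_iff]
  intro w ε hε
  obtain ⟨δ, hδ, hP⟩ := hc ρ hρ w ε hε
  refine ⟨δ, hδ, fun w' hw' => ?_⟩
  have := hP ρ hρ w' (by rw [W2_self]; exact ENNReal.ofReal_pos.2 hδ) (by rwa [dist_comm])
  rwa [Real.dist_eq]

/-- Expansion along the first coordinate, with all `μ`-integrals eliminated via the
normalization identity. -/
lemma flat_exp_fst (hμ : MemP2 μ)
    (F : Measure (EuclideanSpace ℝ (Fin n)) → ℝ)
    (DF : Measure (EuclideanSpace ℝ (Fin n)) → EuclideanSpace ℝ (Fin n) → ℝ)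
    (hFD : IsFlatDeriv F DF)
    (hDFcont : ∀ ρ : Measure (EuclideanSpace ℝ (Fin n)), MemP2 ρ → Continuous (fun w => DF ρ w))
    (hInt : ∀ a b : ℝ, 0 ≤ a → 0 ≤ b → a + b ≤ 1 →
      Integrable (fun w => DF (mmix μ y z a b) w) μ)
    {t v : ℝ} (ht : 0 ≤ t) (ht' : t ≤ 1/4) (hv : 0 ≤ v) (hv' : v ≤ 1/4) :
    F (mmix μ y z t v) - F (mmix μ y z 0 v) =
      t * ∫ r in (0:ℝ)..1, (DF (mmix μ y z (r*t) v) y +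
        (r * t * DF (mmix μ y z (r*t) v) y + v * DF (mmix μ y z (r*t) v) z) / (1 - r*t - v)) := by
  have hm1 : MemP2 (mmix μ y z 0 v) := memP2_mmix hμ y z le_rfl hv (by linarith)
  have hm2 : MemP2 (mmix μ y z t v) := memP2_mmix hμ y z ht hv (by linarith)
  have h := hFD.1 (mmix μ y z 0 v) (mmix μ y z t v) hm1 hm2
  rw [h]
  have hcongr : Set.EqOn
      (fun s => ((∫ w, DF (mix s (mmix μ y z 0 v) (mmix μ y z t v)) w ∂(mmix μ y z t v)) -
        (∫ w, DF (mix s (mmix μ y z 0 v) (mmix μ y z t v)) w ∂(mmix μ y z 0 v))))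
      (fun s => t * (DF (mmix μ y z (s*t) v) y +
        (s * t * DF (mmix μ y z (s*t) v) y + v * DF (mmix μ y z (s*t) v) z) / (1 - s*t - v)))
      (Set.uIcc (0:ℝ) 1) := by
    intro s hs
    rw [Set.uIcc_of_le (by norm_num : (0:ℝ) ≤ 1)] at hs
    obtain ⟨hs0, hs1⟩ := hs
    have hst0 : 0 ≤ s * t := mul_nonneg hs0 ht
    have hst1 : s * t ≤ t := by nlinarith
    have hsum : s * t + v ≤ 1 := by linarith
    have hmem : MemP2 (mmix μ y z (s*t) v) := memP2_mmix hμ y z hst0 hv hsum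
    have hcont := hDFcont _ hmem
    have hint := hInt (s*t) v hst0 hv hsum
    simp only
    rw [mix_mmix_fst μ y z hs0 hs1 ht hv (by linarith),
      integral_mmix hμ y z ht hv (by linarith) hcont hint,
      integral_mmix hμ y z le_rfl hv (by linarith) hcont hint]
    have h0 := hFD.2 _ hmem
    rw [integral_mmix hμ y z hst0 hv hsum hcont hint] at h0
    have hd : (1:ℝ) - s*t - v ≠ 0 := by nlinarith
    have hI : (∫ w, DF (mmix μ y z (s*t) v) w ∂μ) =
        -(s * t * DF (mmix μ y z (s*t) v) y + v * DF (mmix μ y z (s*t) v) z) / (1 - s*t - v) := by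
      field_simp
      linarith
    rw [hI]
    field_simp
    ring
  rw [intervalIntegral.integral_congr hcongr, intervalIntegral.integral_const_mul]

/-- Expansion along the second coordinate. -/
lemma flat_exp_snd (hμ : MemP2 μ)
    (F : Measure (EuclideanSpace ℝ (Fin n)) → ℝ)
    (DF : Measure (EuclideanSpace ℝ (Fin n)) → EuclideanSpace ℝ (Fin n) → ℝ)
    (hFD : IsFlatDeriv F DF)
    (hDFcont : ∀ ρ : Measure (EuclideanSpace ℝ (Fin n)), MemP2 ρ → Continuous (fun w => DF ρ w))
    (hInt : ∀ a b : ℝ, 0 ≤ a → 0 ≤ b → a + b ≤ 1 →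
      Integrable (fun w => DF (mmix μ y z a b) w) μ)
    {t s : ℝ} (ht : 0 ≤ t) (ht' : t ≤ 1/4) (hs : 0 ≤ s) (hs' : s ≤ 1/4) :
    F (mmix μ y z t s) - F (mmix μ y z t 0) =
      s * ∫ u in (0:ℝ)..1, (DF (mmix μ y z t (u*s)) z +
        (t * DF (mmix μ y z t (u*s)) y + u * s * DF (mmix μ y z t (u*s)) z) / (1 - t - u*s)) := by
  have hm1 : MemP2 (mmix μ y z t 0) := memP2_mmix hμ y z ht le_rfl (by linarith)
  have hm2 : MemP2 (mmix μ y z t s) := memP2_mmix hμ y z ht hs (by linarith)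
  have h := hFD.1 (mmix μ y z t 0) (mmix μ y z t s) hm1 hm2
  rw [h]
  have hcongr : Set.EqOn
      (fun u => ((∫ w, DF (mix u (mmix μ y z t 0) (mmix μ y z t s)) w ∂(mmix μ y z t s)) -
        (∫ w, DF (mix u (mmix μ y z t 0) (mmix μ y z t s)) w ∂(mmix μ y z t 0))))
      (fun u => s * (DF (mmix μ y z t (u*s)) z +
        (t * DF (mmix μ y z t (u*s)) y + u * s * DF (mmix μ y z t (u*s)) z) / (1 - t - u*s)))
      (Set.uIcc (0:ℝ) 1) := by
    intro u hu
    rw [Set.uIcc_of_le (by norm_num : (0:ℝ) ≤ 1)] at hu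
    obtain ⟨hu0, hu1⟩ := hu
    have hus0 : 0 ≤ u * s := mul_nonneg hu0 hs
    have hus1 : u * s ≤ s := by nlinarith
    have hsum : t + u * s ≤ 1 := by linarith
    have hmem : MemP2 (mmix μ y z t (u*s)) := memP2_mmix hμ y z ht hus0 hsum
    have hcont := hDFcont _ hmem
    have hint := hInt t (u*s) ht hus0 hsum
    simp only
    rw [mix_mmix_snd μ y z hu0 hu1 ht hs (by linarith),
      integral_mmix hμ y z ht hs (by linarith) hcont hint,
      integral_mmix hμ y z ht le_rfl (by linarith) hcont hint]
    have h0 := hFD.2 _ hmem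
    rw [integral_mmix hμ y z ht hus0 hsum hcont hint] at h0
    have hd : (1:ℝ) - t - u*s ≠ 0 := by nlinarith
    have hI : (∫ w, DF (mmix μ y z t (u*s)) w ∂μ) =
        -(t * DF (mmix μ y z t (u*s)) y + u * s * DF (mmix μ y z t (u*s)) z) / (1 - t - u*s) := by
      field_simp
      linarith
    rw [hI]
    field_simp
    ring
  rw [intervalIntegral.integral_congr hcongr, intervalIntegral.integral_const_mul]

end Expansion

section Limits

variable {μ : Measure (EuclideanSpace ℝ (Fin n))} {y z : EuclideanSpace ℝ (Fin n)}

/-- A real-valued function of measures, continuous at each `P₂` point w.r.t. `W2`. -/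
def Wmod (G : Measure (EuclideanSpace ℝ (Fin n)) → ℝ) : Prop :=
  ∀ ρ, MemP2 ρ → ∀ ε > (0:ℝ), ∃ δ > (0:ℝ), ∀ ν, MemP2 ν →
    W2 ρ ν < ENNReal.ofReal δ → |G ν - G ρ| < ε

lemma wmod_of_cont1 {Dψ : Measure (EuclideanSpace ℝ (Fin n)) → EuclideanSpace ℝ (Fin n) → ℝ}
    (hcont1 : JointContW2₁ Dψ) (p : EuclideanSpace ℝ (Fin n)) :
    Wmod (fun ρ => Dψ ρ p) := by
  intro ρ hρ ε hε
  obtain ⟨δ, hδ, hP⟩ := hcont1 ρ hρ p ε hε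
  exact ⟨δ, hδ, fun ν hν hW => hP ν hν p hW (by simpa using hδ)⟩

lemma wmod_of_cont2 {D2ψ : Measure (EuclideanSpace ℝ (Fin n)) → EuclideanSpace ℝ (Fin n) →
    EuclideanSpace ℝ (Fin n) → ℝ} (hcont2 : JointContW2₂ D2ψ)
    (p q : EuclideanSpace ℝ (Fin n)) : Wmod (fun ρ => D2ψ ρ p q) := by
  intro ρ hρ ε hε
  obtain ⟨δ, hδ, hP⟩ := hcont2 ρ hρ p q ε hε
  exact ⟨δ, hδ, fun ν hν hW => hP ν hν p q hW (by simpa using hδ) (by simpa using hδ)⟩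

/-- Sequential convergence of `G` along mixtures shrinking to `μ`. -/
lemma tendsto_G_mmix (hμ : MemP2 μ) {G : Measure (EuclideanSpace ℝ (Fin n)) → ℝ}
    (hG : Wmod G) {a v : ℕ → ℝ} (ha : ∀ k, 0 ≤ a k) (hv : ∀ k, 0 ≤ v k)
    (hsum : ∀ k, a k + v k ≤ 1/2)
    (ha0 : Filter.Tendsto a Filter.atTop (nhds 0))
    (hv0 : Filter.Tendsto v Filter.atTop (nhds 0)) :
    Filter.Tendsto (fun k => G (mmix μ y z (a k) (v k))) Filter.atTop (nhds (G μ)) := by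
  rw [Metric.tendsto_atTop]
  intro ε hε
  obtain ⟨δ, hδ, hP⟩ := hG μ hμ ε hε
  obtain ⟨η, hη, hW⟩ := W2_mmix_small (y := y) (z := z) hμ hδ
  have hev : ∀ᶠ k in Filter.atTop, |a k - 0| + |v k - 0| < η := by
    have : Filter.Tendsto (fun k => |a k - 0| + |v k - 0|) Filter.atTop (nhds 0) := by
      simpa using ((ha0.sub_const 0).abs.add ((hv0.sub_const 0).abs))
    exact (this.eventually (eventually_lt_nhds hη)).mono (by simp)
  rw [Filter.eventually_atTop] at hev
  obtain ⟨N, hN⟩ := hev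
  refine ⟨N, fun k hk => ?_⟩
  have hmem : MemP2 (mmix μ y z (a k) (v k)) :=
    memP2_mmix hμ y z (ha k) (hv k) (by linarith [hsum k])
  have hWk := hW 0 0 (a k) (v k) le_rfl le_rfl (ha k) (hv k) (by norm_num)
    (hsum k) (by simpa using hN k hk)
  rw [mmix_zero_zero] at hWk
  rw [Real.dist_eq]
  exact hP _ hmem hWk

/-- Continuity of `G` along affine paths in the mixture parameters. -/
lemma continuousOn_G_path (hμ : MemP2 μ) {G : Measure (EuclideanSpace ℝ (Fin n)) → ℝ}
    (hG : Wmod G) {a₀ ta b₀ tb : ℝ} (ha₀ : 0 ≤ a₀) (hta : 0 ≤ ta) (hb₀ : 0 ≤ b₀) (htb : 0 ≤ tb)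
    (hsum : a₀ + ta + (b₀ + tb) ≤ 1/2) :
    ContinuousOn (fun r => G (mmix μ y z (a₀ + r * ta) (b₀ + r * tb))) (Set.Icc (0:ℝ) 1) := by
  intro r₀ hr₀
  rw [Metric.continuousWithinAt_iff]
  intro ε hε
  obtain ⟨hr₀0, hr₀1⟩ := hr₀
  have hmem₀ : MemP2 (mmix μ y z (a₀ + r₀ * ta) (b₀ + r₀ * tb)) :=
    memP2_mmix hμ y z (by nlinarith) (by nlinarith) (by nlinarith)
  obtain ⟨δ, hδ, hP⟩ := hG _ hmem₀ ε hε
  obtain ⟨η, hη, hW⟩ := W2_mmix_small (y := y) (z := z) hμ hδ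
  refine ⟨η / (ta + tb + 1), by positivity, fun r hr hdist => ?_⟩
  obtain ⟨hr0, hr1⟩ := hr
  have hmem : MemP2 (mmix μ y z (a₀ + r * ta) (b₀ + r * tb)) :=
    memP2_mmix hμ y z (by nlinarith) (by nlinarith) (by nlinarith)
  have hd : |(a₀ + r * ta) - (a₀ + r₀ * ta)| + |(b₀ + r * tb) - (b₀ + r₀ * tb)| < η := by
    have h1 : |(a₀ + r * ta) - (a₀ + r₀ * ta)| = |r - r₀| * ta := by
      rw [show (a₀ + r * ta) - (a₀ + r₀ * ta) = (r - r₀) * ta by ring, abs_mul, abs_of_nonneg hta]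
    have h2 : |(b₀ + r * tb) - (b₀ + r₀ * tb)| = |r - r₀| * tb := by
      rw [show (b₀ + r * tb) - (b₀ + r₀ * tb) = (r - r₀) * tb by ring, abs_mul, abs_of_nonneg htb]
    rw [h1, h2, ← mul_add]
    have hrr : |r - r₀| < η / (ta + tb + 1) := by rwa [Real.dist_eq] at hdist
    have habs : 0 ≤ |r - r₀| := abs_nonneg _
    calc |r - r₀| * (ta + tb) ≤ |r - r₀| * (ta + tb + 1) := by nlinarith
      _ < η / (ta + tb + 1) * (ta + tb + 1) := by
          exact mul_lt_mul_of_pos_right hrr (by positivity)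
      _ = η := by field_simp
  have hWr := hW (a₀ + r₀ * ta) (b₀ + r₀ * tb) (a₀ + r * ta) (b₀ + r * tb)
    (by nlinarith) (by nlinarith) (by nlinarith) (by nlinarith) (by nlinarith) (by nlinarith) hd
  rw [Real.dist_eq]
  exact hP _ hmem hWr

end Limits

section Chain

variable {μ : Measure (EuclideanSpace ℝ (Fin n))} {y z : EuclideanSpace ℝ (Fin n)}

noncomputable def LamF (μ : Measure (EuclideanSpace ℝ (Fin n)))
    (y z : EuclideanSpace ℝ (Fin n))
    (Dψ : Measure (EuclideanSpace ℝ (Fin n)) → EuclideanSpace ℝ (Fin n) → ℝ) (t v : ℝ) : ℝ :=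
  Dψ (mmix μ y z t v) z +
    (t * Dψ (mmix μ y z t v) y + v * Dψ (mmix μ y z t v) z) / (1 - t - v)

noncomputable def PhiF (μ : Measure (EuclideanSpace ℝ (Fin n)))
    (y z : EuclideanSpace ℝ (Fin n))
    (D2ψ : Measure (EuclideanSpace ℝ (Fin n)) → EuclideanSpace ℝ (Fin n) →
      EuclideanSpace ℝ (Fin n) → ℝ) (a v : ℝ) : ℝ :=
  D2ψ (mmix μ y z a v) z y +
    (a * D2ψ (mmix μ y z a v) z y + v * D2ψ (mmix μ y z a v) z z) / (1 - a - v)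

lemma Gdecomp {P Q Y YQ I t v : ℝ} (ht : t ≠ 0) (hd : 1 - t - v ≠ 0) (he : 1 - v ≠ 0)
    (hPQ : P - Q = t * I) :
    ((P + (t * Y + v * P) / (1 - t - v)) - (Q + (0 * YQ + v * Q) / (1 - 0 - v))) / t
      = I + Y / (1 - t - v) + v * (I / (1 - t - v) + Q / ((1 - t - v) * (1 - v))) := by
  have hP : P = Q + t * I := by linarith
  rw [hP, sub_zero]
  field_simp
  ring

noncomputable def Tseq (k : ℕ) : ℝ := 1 / ((k : ℝ) + 4)

lemma Tseq_pos (k : ℕ) : 0 < Tseq k := by unfold Tseq; positivity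

lemma Tseq_le (k : ℕ) : Tseq k ≤ 1/4 := by
  unfold Tseq
  rw [div_le_div_iff₀ (by positivity) (by norm_num)]
  have : (0:ℝ) ≤ (k:ℝ) := Nat.cast_nonneg k
  linarith

lemma Tseq_tendsto : Filter.Tendsto Tseq Filter.atTop (nhds 0) := by
  have h : Filter.Tendsto (fun k : ℕ => ((k : ℝ) + 4)) Filter.atTop Filter.atTop :=
    Filter.tendsto_atTop_add_const_right _ 4 tendsto_natCast_atTop_atTop
  have := h.inv_tendsto_atTop
  refine this.congr fun k => ?_
  simp [Tseq, one_div]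

set_option maxHeartbeats 1000000 in
lemma chain_limit (hμ : MemP2 μ)
    (ψ : Measure (EuclideanSpace ℝ (Fin n)) → ℝ)
    (Dψ : Measure (EuclideanSpace ℝ (Fin n)) → EuclideanSpace ℝ (Fin n) → ℝ)
    (D2ψ : Measure (EuclideanSpace ℝ (Fin n)) → EuclideanSpace ℝ (Fin n) →
      EuclideanSpace ℝ (Fin n) → ℝ)
    (hD1 : IsFlatDeriv ψ Dψ)
    (hD2 : ∀ p, IsFlatDeriv (fun ρ => Dψ ρ p) (fun ρ q => D2ψ ρ p q))
    (hcont1 : JointContW2₁ Dψ)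
    (hcont2 : JointContW2₂ D2ψ)
    (hgrowth : ∀ K > (0 : ℝ), ∃ C_K : ℝ, ∀ ρ, MemP2 ρ →
      W2 ρ (Measure.dirac 0) ≤ ENNReal.ofReal K →
      ∀ p q : EuclideanSpace ℝ (Fin n),
        |Dψ ρ p| ≤ C_K * (1 + ‖p‖ ^ 2 + ‖q‖ ^ 2)
        ∧ |D2ψ ρ p q| ≤ C_K * (1 + ‖p‖ ^ 2 + ‖q‖ ^ 2)) :
    Filter.Tendsto (fun k : ℕ =>
      (ψ (mmix μ y z (Tseq k) (Tseq k)) - ψ (mmix μ y z (Tseq k) 0)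
        - ψ (mmix μ y z 0 (Tseq k)) + ψ μ) / (Tseq k * Tseq k))
      Filter.atTop (nhds (D2ψ μ z y + Dψ μ y)) := by
  classical
  -- growth constants
  obtain ⟨K, hK, hKb⟩ := W2_mmix_dirac0 hμ y z
  obtain ⟨C, hC⟩ := hgrowth K hK
  set S : ℝ := ‖y‖^2 + ‖z‖^2 with hSdef
  have hS0 : 0 ≤ S := by positivity
  set CB : ℝ := |C| * (1 + S + S) + 1 with hCBdef
  have hCBpos : 0 < CB := by positivity
  have hpS : ∀ p : EuclideanSpace ℝ (Fin n), (p = y ∨ p = z) → ‖p‖^2 ≤ S := by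
    intro p hp
    rcases hp with h | h <;> subst h <;> rw [hSdef] <;>
      [nlinarith [sq_nonneg ‖z‖]; nlinarith [sq_nonneg ‖y‖]]
  have hBD2 : ∀ a b : ℝ, 0 ≤ a → 0 ≤ b → a + b ≤ 1 → ∀ p q : EuclideanSpace ℝ (Fin n),
      (p = y ∨ p = z) → (q = y ∨ q = z) → |D2ψ (mmix μ y z a b) p q| ≤ CB := by
    intro a b ha hb hab p q hp hq
    have hmem := memP2_mmix hμ y z ha hb hab
    have h2 := (hC _ hmem (hKb a b ha hb hab) p q).2
    have h3 : C * (1 + ‖p‖^2 + ‖q‖^2) ≤ |C| * (1 + ‖p‖^2 + ‖q‖^2) :=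
      mul_le_mul_of_nonneg_right (le_abs_self C) (by positivity)
    have h4 : |C| * (1 + ‖p‖^2 + ‖q‖^2) ≤ |C| * (1 + S + S) :=
      mul_le_mul_of_nonneg_left (by
        have := hpS p hp
        have := hpS q hq
        linarith) (abs_nonneg C)
    rw [hCBdef]
    linarith
  have hBD1 : ∀ a b : ℝ, 0 ≤ a → 0 ≤ b → a + b ≤ 1 → ∀ p : EuclideanSpace ℝ (Fin n),
      (p = y ∨ p = z) → |Dψ (mmix μ y z a b) p| ≤ CB := by
    intro a b ha hb hab p hp
    have hmem := memP2_mmix hμ y z ha hb hab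
    have h2 := (hC _ hmem (hKb a b ha hb hab) p z).1
    have h3 : C * (1 + ‖p‖^2 + ‖z‖^2) ≤ |C| * (1 + ‖p‖^2 + ‖z‖^2) :=
      mul_le_mul_of_nonneg_right (le_abs_self C) (by positivity)
    have h4 : |C| * (1 + ‖p‖^2 + ‖z‖^2) ≤ |C| * (1 + S + S) :=
      mul_le_mul_of_nonneg_left (by
        have := hpS p hp
        have h5 : ‖z‖^2 ≤ S := hpS z (Or.inr rfl)
        linarith) (abs_nonneg C)
    rw [hCBdef]
    linarith
  -- continuity in the point variable
  have hcontD1 : ∀ ρ : Measure (EuclideanSpace ℝ (Fin n)), MemP2 ρ →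
      Continuous (fun w => Dψ ρ w) := fun ρ hρ => continuous_in_point hcont1 hρ
  have hcontD2z : ∀ ρ : Measure (EuclideanSpace ℝ (Fin n)), MemP2 ρ →
      Continuous (fun w => D2ψ ρ z w) := by
    intro ρ hρ
    refine continuous_in_point (DF := fun ρ w => D2ψ ρ z w) ?_ hρ
    intro ρ' hρ' w ε hε
    obtain ⟨δ, hδ, hP⟩ := hcont2 ρ' hρ' z w ε hε
    exact ⟨δ, hδ, fun ν hν w' hW hdist => hP ν hν z w' hW (by simpa using hδ) hdist⟩
  -- integrability
  have hIntD1 : ∀ a b : ℝ, 0 ≤ a → 0 ≤ b → a + b ≤ 1 →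
      Integrable (fun w => Dψ (mmix μ y z a b) w) μ := by
    intro a b ha hb hab
    have hmem := memP2_mmix hμ y z ha hb hab
    refine integrable_of_growth (c := |C| + 1) hμ (hcontD1 _ hmem) fun w => ?_
    have h1 := (hC _ hmem (hKb a b ha hb hab) w 0).1
    have h1' : |Dψ (mmix μ y z a b) w| ≤ C * (1 + ‖w‖^2) := by simpa using h1
    nlinarith [le_abs_self C, abs_nonneg C, sq_nonneg ‖w‖]
  have hIntD2 : ∀ a b : ℝ, 0 ≤ a → 0 ≤ b → a + b ≤ 1 →
      Integrable (fun w => D2ψ (mmix μ y z a b) z w) μ := by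
    intro a b ha hb hab
    have hmem := memP2_mmix hμ y z ha hb hab
    refine integrable_of_growth (c := (|C| + 1) * (1 + ‖z‖^2)) hμ (hcontD2z _ hmem) fun w => ?_
    have h1 := (hC _ hmem (hKb a b ha hb hab) z w).2
    nlinarith [le_abs_self C, abs_nonneg C, sq_nonneg ‖w‖, sq_nonneg ‖z‖,
      mul_nonneg (sq_nonneg ‖z‖) (sq_nonneg ‖w‖)]
  -- master expansions
  have hS0' : ∀ t s : ℝ, 0 ≤ t → t ≤ 1/4 → 0 ≤ s → s ≤ 1/4 →
      ψ (mmix μ y z t s) - ψ (mmix μ y z t 0)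
        = s * ∫ u in (0:ℝ)..1, LamF μ y z Dψ t (u*s) := by
    intro t s ht ht' hs hs'
    simpa only [LamF] using flat_exp_snd hμ ψ Dψ hD1 hcontD1 hIntD1 ht ht' hs hs'
  have hS1' : ∀ t v : ℝ, 0 ≤ t → t ≤ 1/4 → 0 ≤ v → v ≤ 1/4 →
      Dψ (mmix μ y z t v) z - Dψ (mmix μ y z 0 v) z
        = t * ∫ r in (0:ℝ)..1, PhiF μ y z D2ψ (r*t) v := by
    intro t v ht ht' hv hv'
    simpa only [PhiF] using flat_exp_fst hμ (fun ρ => Dψ ρ z) (fun ρ q => D2ψ ρ z q)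
      (hD2 z) hcontD2z hIntD2 ht ht' hv hv'
  -- path continuity of Phi in r
  have hPhiContOn : ∀ t v : ℝ, 0 ≤ t → t ≤ 1/4 → 0 ≤ v → v ≤ 1/4 →
      ContinuousOn (fun r => PhiF μ y z D2ψ (r * t) v) (Set.Icc (0:ℝ) 1) := by
    intro t v ht ht' hv hv'
    have hG1 : ContinuousOn (fun r => D2ψ (mmix μ y z (r*t) v) z y) (Set.Icc (0:ℝ) 1) := by
      have h := continuousOn_G_path (y := y) (z := z) hμ (wmod_of_cont2 hcont2 z y)
        (a₀ := 0) (ta := t) (b₀ := v) (tb := 0) le_rfl ht hv le_rfl (by linarith)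
      refine h.congr fun r _ => ?_
      norm_num
    have hG2 : ContinuousOn (fun r => D2ψ (mmix μ y z (r*t) v) z z) (Set.Icc (0:ℝ) 1) := by
      have h := continuousOn_G_path (y := y) (z := z) hμ (wmod_of_cont2 hcont2 z z)
        (a₀ := 0) (ta := t) (b₀ := v) (tb := 0) le_rfl ht hv le_rfl (by linarith)
      refine h.congr fun r _ => ?_
      norm_num
    have hden : ∀ r ∈ Set.Icc (0:ℝ) 1, 1 - r*t - v ≠ 0 := by
      intro r hr
      have h1 := hr.1; have h2 := hr.2
      nlinarith
    simp only [PhiF]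
    exact hG1.add
      (((((continuous_id.mul continuous_const).continuousOn).mul hG1).add
          (continuousOn_const.mul hG2)).div
        ((continuousOn_const.sub ((continuous_id.mul continuous_const).continuousOn)).sub
          continuousOn_const) hden)
  -- path continuity of Lam-difference quotient in u (for fixed k)
  have hLamContOn : ∀ t s : ℝ, 0 ≤ t → t ≤ 1/4 → 0 ≤ s → s ≤ 1/4 →
      ContinuousOn (fun u => LamF μ y z Dψ t (u * s)) (Set.Icc (0:ℝ) 1) := by
    intro t s ht ht' hs hs'
    have hG1 : ContinuousOn (fun u => Dψ (mmix μ y z t (u*s)) z) (Set.Icc (0:ℝ) 1) := by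
      have h := continuousOn_G_path (y := y) (z := z) hμ (wmod_of_cont1 hcont1 z)
        (a₀ := t) (ta := 0) (b₀ := 0) (tb := s) ht le_rfl le_rfl hs (by linarith)
      refine h.congr fun u _ => ?_
      norm_num
    have hG2 : ContinuousOn (fun u => Dψ (mmix μ y z t (u*s)) y) (Set.Icc (0:ℝ) 1) := by
      have h := continuousOn_G_path (y := y) (z := z) hμ (wmod_of_cont1 hcont1 y)
        (a₀ := t) (ta := 0) (b₀ := 0) (tb := s) ht le_rfl le_rfl hs (by linarith)
      refine h.congr fun u _ => ?_
      norm_num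
    have hden : ∀ u ∈ Set.Icc (0:ℝ) 1, 1 - t - u*s ≠ 0 := by
      intro u hu
      have h1 := hu.1; have h2 := hu.2
      nlinarith
    simp only [LamF]
    exact hG1.add
      ((((continuousOn_const.mul hG2)).add
          (((continuous_id.mul continuous_const).continuousOn).mul hG1)).div
        ((continuousOn_const.sub continuousOn_const).sub
          ((continuous_id.mul continuous_const).continuousOn)) hden)
  -- uniform bound on Phi
  have hPhiBound : ∀ a v : ℝ, 0 ≤ a → a ≤ 1/4 → 0 ≤ v → v ≤ 1/4 →
      |PhiF μ y z D2ψ a v| ≤ 2 * CB := by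
    intro a v ha ha' hv hv'
    have h1 := hBD2 a v ha hv (by linarith) z y (Or.inr rfl) (Or.inl rfl)
    have h2 := hBD2 a v ha hv (by linarith) z z (Or.inr rfl) (Or.inr rfl)
    have hdpos : (0:ℝ) < 1 - a - v := by linarith
    simp only [PhiF]
    set X := D2ψ (mmix μ y z a v) z y with hX
    set Y := D2ψ (mmix μ y z a v) z z with hY
    have hnum : |a * X + v * Y| ≤ (a + v) * CB := by
      calc |a * X + v * Y| ≤ |a * X| + |v * Y| := abs_add_le _ _
        _ = a * |X| + v * |Y| := by rw [abs_mul, abs_mul, abs_of_nonneg ha, abs_of_nonneg hv]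
        _ ≤ (a + v) * CB := by nlinarith [abs_nonneg X, abs_nonneg Y]
    have hq : |(a * X + v * Y) / (1 - a - v)| ≤ CB := by
      rw [abs_div, abs_of_pos hdpos, div_le_iff₀ hdpos]
      nlinarith [abs_nonneg (a * X + v * Y)]
    calc |X + (a * X + v * Y) / (1 - a - v)|
        ≤ |X| + |(a * X + v * Y) / (1 - a - v)| := abs_add_le _ _
      _ ≤ 2 * CB := by linarith
  -- bound on the inner integral
  have hIbound : ∀ t v : ℝ, 0 ≤ t → t ≤ 1/4 → 0 ≤ v → v ≤ 1/4 →
      |∫ r in (0:ℝ)..1, PhiF μ y z D2ψ (r*t) v| ≤ 2 * CB := by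
    intro t v ht ht' hv hv'
    have h := intervalIntegral.norm_integral_le_of_norm_le_const
      (C := 2*CB) (f := fun r => PhiF μ y z D2ψ (r*t) v) (a := (0:ℝ)) (b := 1) ?_
    · rw [Real.norm_eq_abs] at h
      simpa using h
    · intro r hr
      rw [Set.uIoc_of_le (by norm_num : (0:ℝ) ≤ 1)] at hr
      have hr0 : 0 < r := hr.1
      have hr1 : r ≤ 1 := hr.2
      rw [Real.norm_eq_abs]
      exact hPhiBound (r*t) v (mul_nonneg hr0.le ht) (by nlinarith) hv hv'
  -- limit of the inner integral
  have hIlim : ∀ u : ℝ, 0 < u → u ≤ 1 →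
      Filter.Tendsto (fun k => ∫ r in (0:ℝ)..1, PhiF μ y z D2ψ (r * Tseq k) (u * Tseq k))
        Filter.atTop (nhds (D2ψ μ z y)) := by
    intro u hu0 hu1
    have husb : ∀ k, u * Tseq k ≤ 1/4 := fun k => by nlinarith [Tseq_pos k, Tseq_le k]
    have hus0 : ∀ k, 0 ≤ u * Tseq k := fun k => mul_nonneg hu0.le (Tseq_pos k).le
    have hmeas : ∀ k, AEStronglyMeasurable
        (fun r => PhiF μ y z D2ψ (r * Tseq k) (u * Tseq k))
        (volume.restrict (Set.Ioc (0:ℝ) 1)) := by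
      intro k
      have hc := hPhiContOn (Tseq k) (u * Tseq k) (Tseq_pos k).le (Tseq_le k) (hus0 k) (husb k)
      exact (hc.aestronglyMeasurable measurableSet_Icc).mono_measure
        (Measure.restrict_mono Set.Ioc_subset_Icc_self le_rfl)
    have hbint : Integrable (fun _ : ℝ => 2*CB) (volume.restrict (Set.Ioc (0:ℝ) 1)) :=
      MeasureTheory.integrableOn_const measure_Ioc_lt_top.ne
    have hbd : ∀ k, ∀ᵐ r ∂(volume.restrict (Set.Ioc (0:ℝ) 1)),
        ‖PhiF μ y z D2ψ (r * Tseq k) (u * Tseq k)‖ ≤ 2*CB := by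
      intro k
      refine (MeasureTheory.ae_restrict_iff' measurableSet_Ioc).2
        (Filter.Eventually.of_forall fun r hr => ?_)
      rw [Real.norm_eq_abs]
      exact hPhiBound _ _ (mul_nonneg hr.1.le (Tseq_pos k).le)
        (by nlinarith [hr.1, hr.2, Tseq_pos k, Tseq_le k]) (hus0 k) (husb k)
    have hptw : ∀ᵐ r ∂(volume.restrict (Set.Ioc (0:ℝ) 1)),
        Filter.Tendsto (fun k => PhiF μ y z D2ψ (r * Tseq k) (u * Tseq k))
          Filter.atTop (nhds (D2ψ μ z y)) := by
      refine (MeasureTheory.ae_restrict_iff' measurableSet_Ioc).2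
        (Filter.Eventually.of_forall fun r hr => ?_)
      have hr0 : 0 < r := hr.1
      have hr1 : r ≤ 1 := hr.2
      have ha0 : Filter.Tendsto (fun k => r * Tseq k) Filter.atTop (nhds 0) := by
        simpa using Tseq_tendsto.const_mul r
      have hv0 : Filter.Tendsto (fun k => u * Tseq k) Filter.atTop (nhds 0) := by
        simpa using Tseq_tendsto.const_mul u
      have hson : ∀ k, r * Tseq k + u * Tseq k ≤ 1/2 := fun k => by
        nlinarith [Tseq_pos k, Tseq_le k]
      have h1 := tendsto_G_mmix (y := y) (z := z) hμ (wmod_of_cont2 hcont2 z y)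
        (a := fun k => r * Tseq k) (v := fun k => u * Tseq k)
        (fun k => mul_nonneg hr0.le (Tseq_pos k).le) hus0 hson ha0 hv0
      have h2 := tendsto_G_mmix (y := y) (z := z) hμ (wmod_of_cont2 hcont2 z z)
        (a := fun k => r * Tseq k) (v := fun k => u * Tseq k)
        (fun k => mul_nonneg hr0.le (Tseq_pos k).le) hus0 hson ha0 hv0
      have hnum := (ha0.mul h1).add (hv0.mul h2)
      have hden : Filter.Tendsto (fun k => 1 - r*Tseq k - u*Tseq k) Filter.atTop
          (nhds (1 - 0 - 0)) := (tendsto_const_nhds.sub ha0).sub hv0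
      have hdiv := hnum.div hden (by norm_num)
      have htot := h1.add hdiv
      have heq : D2ψ μ z y + (0 * D2ψ μ z y + 0 * D2ψ μ z z) / (1 - 0 - 0) = D2ψ μ z y := by
        ring
      rw [heq] at htot
      exact htot
    have hmain := MeasureTheory.tendsto_integral_of_dominated_convergence
      (fun _ => 2*CB) hmeas hbint hbd hptw
    have hconst : (∫ _ in Set.Ioc (0:ℝ) 1, D2ψ μ z y) = D2ψ μ z y := by
      simp [Real.volume_Ioc]
    have hconv : ∀ k, (∫ r in (0:ℝ)..1, PhiF μ y z D2ψ (r * Tseq k) (u * Tseq k))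
        = ∫ r in Set.Ioc (0:ℝ) 1, PhiF μ y z D2ψ (r * Tseq k) (u * Tseq k) := fun k =>
      intervalIntegral.integral_of_le (by norm_num)
    rw [show (fun k => ∫ r in (0:ℝ)..1, PhiF μ y z D2ψ (r * Tseq k) (u * Tseq k))
        = (fun k => ∫ r in Set.Ioc (0:ℝ) 1, PhiF μ y z D2ψ (r * Tseq k) (u * Tseq k))
      from funext hconv, ← hconst]
    exact hmain
  -- the exact identity for the difference quotient
  have hID : ∀ k, (ψ (mmix μ y z (Tseq k) (Tseq k)) - ψ (mmix μ y z (Tseq k) 0)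
        - ψ (mmix μ y z 0 (Tseq k)) + ψ μ) / (Tseq k * Tseq k)
      = ∫ u in (0:ℝ)..1,
          (LamF μ y z Dψ (Tseq k) (u * Tseq k) - LamF μ y z Dψ 0 (u * Tseq k)) / Tseq k := by
    intro k
    have ht0 := Tseq_pos k
    have ht4 := Tseq_le k
    have hA := hS0' (Tseq k) (Tseq k) ht0.le ht4 ht0.le ht4
    have hB := hS0' 0 (Tseq k) le_rfl (by norm_num) ht0.le ht4
    rw [mmix_zero_zero] at hB
    have hintA : IntervalIntegrable (fun u => LamF μ y z Dψ (Tseq k) (u * Tseq k)) volume 0 1 := by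
      apply ContinuousOn.intervalIntegrable
      rw [Set.uIcc_of_le (by norm_num : (0:ℝ) ≤ 1)]
      exact hLamContOn (Tseq k) (Tseq k) ht0.le ht4 ht0.le ht4
    have hintB : IntervalIntegrable (fun u => LamF μ y z Dψ 0 (u * Tseq k)) volume 0 1 := by
      apply ContinuousOn.intervalIntegrable
      rw [Set.uIcc_of_le (by norm_num : (0:ℝ) ≤ 1)]
      exact hLamContOn 0 (Tseq k) le_rfl (by norm_num) ht0.le ht4
    have e1 : ψ (mmix μ y z (Tseq k) (Tseq k)) - ψ (mmix μ y z (Tseq k) 0)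
        - ψ (mmix μ y z 0 (Tseq k)) + ψ μ
        = Tseq k * ((∫ u in (0:ℝ)..1, LamF μ y z Dψ (Tseq k) (u * Tseq k))
          - (∫ u in (0:ℝ)..1, LamF μ y z Dψ 0 (u * Tseq k))) := by
      rw [mul_sub, ← hA, ← hB]
      ring
    rw [e1, ← intervalIntegral.integral_sub hintA hintB, intervalIntegral.integral_div]
    field_simp
  -- decomposition of the difference quotient
  have hGdecomp : ∀ k, ∀ u : ℝ, 0 < u → u ≤ 1 →
      (LamF μ y z Dψ (Tseq k) (u * Tseq k) - LamF μ y z Dψ 0 (u * Tseq k)) / Tseq k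
        = (∫ r in (0:ℝ)..1, PhiF μ y z D2ψ (r * Tseq k) (u * Tseq k))
          + Dψ (mmix μ y z (Tseq k) (u * Tseq k)) y / (1 - Tseq k - u * Tseq k)
          + (u * Tseq k) *
            ((∫ r in (0:ℝ)..1, PhiF μ y z D2ψ (r * Tseq k) (u * Tseq k))
                / (1 - Tseq k - u * Tseq k)
              + Dψ (mmix μ y z 0 (u * Tseq k)) z
                / ((1 - Tseq k - u * Tseq k) * (1 - u * Tseq k))) := by
    intro k u hu0 hu1
    have ht0 := Tseq_pos k
    have ht4 := Tseq_le k
    have hv0le : 0 ≤ u * Tseq k := mul_nonneg hu0.le ht0.le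
    have hvle : u * Tseq k ≤ 1/4 := by nlinarith
    have hPQ := hS1' (Tseq k) (u * Tseq k) ht0.le ht4 hv0le hvle
    have hd : 1 - Tseq k - u * Tseq k ≠ 0 := by nlinarith
    have he : 1 - u * Tseq k ≠ 0 := by nlinarith
    have hgd := Gdecomp (P := Dψ (mmix μ y z (Tseq k) (u * Tseq k)) z)
      (Q := Dψ (mmix μ y z 0 (u * Tseq k)) z)
      (Y := Dψ (mmix μ y z (Tseq k) (u * Tseq k)) y)
      (YQ := Dψ (mmix μ y z 0 (u * Tseq k)) y)
      (I := ∫ r in (0:ℝ)..1, PhiF μ y z D2ψ (r * Tseq k) (u * Tseq k))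
      (t := Tseq k) (v := u * Tseq k) ht0.ne' hd he hPQ
    simp only [LamF]
    exact hgd
  -- pointwise limit of the difference quotient
  have hGlim : ∀ u : ℝ, 0 < u → u ≤ 1 →
      Filter.Tendsto (fun k =>
        (LamF μ y z Dψ (Tseq k) (u * Tseq k) - LamF μ y z Dψ 0 (u * Tseq k)) / Tseq k)
        Filter.atTop (nhds (D2ψ μ z y + Dψ μ y)) := by
    intro u hu0 hu1
    have hI := hIlim u hu0 hu1
    have hv0 : Filter.Tendsto (fun k => u * Tseq k) Filter.atTop (nhds 0) := by
      simpa using Tseq_tendsto.const_mul u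
    have hus0 : ∀ k, 0 ≤ u * Tseq k := fun k => mul_nonneg hu0.le (Tseq_pos k).le
    have hson : ∀ k, Tseq k + u * Tseq k ≤ 1/2 := fun k => by
      nlinarith [Tseq_pos k, Tseq_le k]
    have hson' : ∀ k, (0:ℝ) + u * Tseq k ≤ 1/2 := fun k => by
      nlinarith [Tseq_pos k, Tseq_le k]
    have hY : Filter.Tendsto (fun k => Dψ (mmix μ y z (Tseq k) (u * Tseq k)) y)
        Filter.atTop (nhds (Dψ μ y)) :=
      tendsto_G_mmix (y := y) (z := z) hμ (wmod_of_cont1 hcont1 y) (a := Tseq)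
        (v := fun k => u * Tseq k) (fun k => (Tseq_pos k).le) hus0 hson Tseq_tendsto hv0
    have hQ : Filter.Tendsto (fun k => Dψ (mmix μ y z 0 (u * Tseq k)) z)
        Filter.atTop (nhds (Dψ μ z)) :=
      tendsto_G_mmix (y := y) (z := z) hμ (wmod_of_cont1 hcont1 z) (a := fun _ => 0)
        (v := fun k => u * Tseq k) (fun _ => le_rfl) hus0 hson' tendsto_const_nhds hv0
    have hd : Filter.Tendsto (fun k => 1 - Tseq k - u * Tseq k) Filter.atTop
        (nhds (1 - 0 - 0)) := (tendsto_const_nhds.sub Tseq_tendsto).sub hv0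
    have he : Filter.Tendsto (fun k => 1 - u * Tseq k) Filter.atTop (nhds (1 - 0)) :=
      tendsto_const_nhds.sub hv0
    have htot := (hI.add (hY.div hd (by norm_num))).add
      (hv0.mul ((hI.div hd (by norm_num)).add (hQ.div (hd.mul he) (by norm_num))))
    have heq : D2ψ μ z y + Dψ μ y / (1 - 0 - 0)
        + 0 * (D2ψ μ z y / (1 - 0 - 0) + Dψ μ z / ((1 - 0 - 0) * (1 - 0)))
        = D2ψ μ z y + Dψ μ y := by ring
    rw [heq] at htot
    exact Filter.Tendsto.congr (fun k => (hGdecomp k u hu0 hu1).symm) htot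
  -- uniform bound on the difference quotient
  have hGbound : ∀ k, ∀ u : ℝ, 0 < u → u ≤ 1 →
      |(LamF μ y z Dψ (Tseq k) (u * Tseq k) - LamF μ y z Dψ 0 (u * Tseq k)) / Tseq k|
        ≤ 6 * CB := by
    intro k u hu0 hu1
    have ht0 := Tseq_pos k
    have ht4 := Tseq_le k
    have hv0le : 0 ≤ u * Tseq k := mul_nonneg hu0.le ht0.le
    have hvle : u * Tseq k ≤ 1/4 := by nlinarith
    rw [hGdecomp k u hu0 hu1]
    set I := ∫ r in (0:ℝ)..1, PhiF μ y z D2ψ (r * Tseq k) (u * Tseq k) with hIdef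
    set Yv := Dψ (mmix μ y z (Tseq k) (u * Tseq k)) y with hYdef
    set Q := Dψ (mmix μ y z 0 (u * Tseq k)) z with hQdef
    have hIb : |I| ≤ 2 * CB := hIbound (Tseq k) (u * Tseq k) ht0.le ht4 hv0le hvle
    have hYb : |Yv| ≤ CB := hBD1 (Tseq k) (u * Tseq k) ht0.le hv0le (by linarith) y (Or.inl rfl)
    have hQb : |Q| ≤ CB := hBD1 0 (u * Tseq k) le_rfl hv0le (by linarith) z (Or.inr rfl)
    have hdpos : (0:ℝ) < 1 - Tseq k - u * Tseq k := by nlinarith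
    have hd2 : (1:ℝ)/2 ≤ 1 - Tseq k - u * Tseq k := by nlinarith
    have hepos : (0:ℝ) < 1 - u * Tseq k := by nlinarith
    have he2 : (1:ℝ)/2 ≤ 1 - u * Tseq k := by nlinarith
    have hA1 : |Yv / (1 - Tseq k - u * Tseq k)| ≤ 2 * CB := by
      rw [abs_div, abs_of_pos hdpos, div_le_iff₀ hdpos]
      nlinarith [abs_nonneg Yv]
    have hA2 : |I / (1 - Tseq k - u * Tseq k)| ≤ 4 * CB := by
      rw [abs_div, abs_of_pos hdpos, div_le_iff₀ hdpos]
      nlinarith [abs_nonneg I]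
    have hde : (1:ℝ)/4 ≤ (1 - Tseq k - u * Tseq k) * (1 - u * Tseq k) := by nlinarith
    have hA3 : |Q / ((1 - Tseq k - u * Tseq k) * (1 - u * Tseq k))| ≤ 4 * CB := by
      rw [abs_div, abs_of_pos (mul_pos hdpos hepos), div_le_iff₀ (mul_pos hdpos hepos)]
      nlinarith [abs_nonneg Q, hQb, hde, hCBpos.le]
    have hA4 : |u * Tseq k *
        (I / (1 - Tseq k - u * Tseq k)
          + Q / ((1 - Tseq k - u * Tseq k) * (1 - u * Tseq k)))| ≤ 2 * CB := by
      rw [abs_mul, abs_of_nonneg hv0le]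
      have hsum : |I / (1 - Tseq k - u * Tseq k)
          + Q / ((1 - Tseq k - u * Tseq k) * (1 - u * Tseq k))| ≤ 8 * CB :=
        le_trans (abs_add_le _ _) (by linarith)
      nlinarith [abs_nonneg (I / (1 - Tseq k - u * Tseq k)
        + Q / ((1 - Tseq k - u * Tseq k) * (1 - u * Tseq k)))]
    calc |I + Yv / (1 - Tseq k - u * Tseq k) + u * Tseq k *
          (I / (1 - Tseq k - u * Tseq k)
            + Q / ((1 - Tseq k - u * Tseq k) * (1 - u * Tseq k)))|
        ≤ |I + Yv / (1 - Tseq k - u * Tseq k)| + |u * Tseq k *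
          (I / (1 - Tseq k - u * Tseq k)
            + Q / ((1 - Tseq k - u * Tseq k) * (1 - u * Tseq k)))| := abs_add_le _ _
      _ ≤ |I| + |Yv / (1 - Tseq k - u * Tseq k)| + |u * Tseq k *
          (I / (1 - Tseq k - u * Tseq k)
            + Q / ((1 - Tseq k - u * Tseq k) * (1 - u * Tseq k)))| := by
          linarith [abs_add_le I (Yv / (1 - Tseq k - u * Tseq k))]
      _ ≤ 6 * CB := by linarith
  -- final dominated convergence
  rw [show (fun k : ℕ => (ψ (mmix μ y z (Tseq k) (Tseq k)) - ψ (mmix μ y z (Tseq k) 0)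
      - ψ (mmix μ y z 0 (Tseq k)) + ψ μ) / (Tseq k * Tseq k))
    = (fun k => ∫ u in (0:ℝ)..1,
        (LamF μ y z Dψ (Tseq k) (u * Tseq k) - LamF μ y z Dψ 0 (u * Tseq k)) / Tseq k)
    from funext hID]
  have hmeas : ∀ k, AEStronglyMeasurable
      (fun u => (LamF μ y z Dψ (Tseq k) (u * Tseq k) - LamF μ y z Dψ 0 (u * Tseq k)) / Tseq k)
      (volume.restrict (Set.Ioc (0:ℝ) 1)) := by
    intro k
    have hc : ContinuousOn
        (fun u => (LamF μ y z Dψ (Tseq k) (u * Tseq k) - LamF μ y z Dψ 0 (u * Tseq k)) / Tseq k)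
        (Set.Icc (0:ℝ) 1) :=
      ((hLamContOn (Tseq k) (Tseq k) (Tseq_pos k).le (Tseq_le k) (Tseq_pos k).le
        (Tseq_le k)).sub (hLamContOn 0 (Tseq k) le_rfl (by norm_num) (Tseq_pos k).le
        (Tseq_le k))).div_const _
    exact (hc.aestronglyMeasurable measurableSet_Icc).mono_measure
      (Measure.restrict_mono Set.Ioc_subset_Icc_self le_rfl)
  have hbint : Integrable (fun _ : ℝ => 6*CB) (volume.restrict (Set.Ioc (0:ℝ) 1)) :=
    MeasureTheory.integrableOn_const measure_Ioc_lt_top.ne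
  have hbd : ∀ k, ∀ᵐ u ∂(volume.restrict (Set.Ioc (0:ℝ) 1)),
      ‖(LamF μ y z Dψ (Tseq k) (u * Tseq k) - LamF μ y z Dψ 0 (u * Tseq k)) / Tseq k‖
        ≤ 6*CB := by
    intro k
    refine (MeasureTheory.ae_restrict_iff' measurableSet_Ioc).2
      (Filter.Eventually.of_forall fun u hu => ?_)
    rw [Real.norm_eq_abs]
    exact hGbound k u hu.1 hu.2
  have hptw : ∀ᵐ u ∂(volume.restrict (Set.Ioc (0:ℝ) 1)),
      Filter.Tendsto (fun k =>
        (LamF μ y z Dψ (Tseq k) (u * Tseq k) - LamF μ y z Dψ 0 (u * Tseq k)) / Tseq k)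
        Filter.atTop (nhds (D2ψ μ z y + Dψ μ y)) := by
    refine (MeasureTheory.ae_restrict_iff' measurableSet_Ioc).2
      (Filter.Eventually.of_forall fun u hu => ?_)
    exact hGlim u hu.1 hu.2
  have hmain := MeasureTheory.tendsto_integral_of_dominated_convergence
    (fun _ => 6*CB) hmeas hbint hbd hptw
  have hconst : (∫ _ in Set.Ioc (0:ℝ) 1, (D2ψ μ z y + Dψ μ y)) = D2ψ μ z y + Dψ μ y := by
    simp [Real.volume_Ioc]
  have hconv : ∀ k, (∫ u in (0:ℝ)..1,
      (LamF μ y z Dψ (Tseq k) (u * Tseq k) - LamF μ y z Dψ 0 (u * Tseq k)) / Tseq k)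
      = ∫ u in Set.Ioc (0:ℝ) 1,
        (LamF μ y z Dψ (Tseq k) (u * Tseq k) - LamF μ y z Dψ 0 (u * Tseq k)) / Tseq k :=
    fun k => intervalIntegral.integral_of_le (by norm_num)
  rw [show (fun k => ∫ u in (0:ℝ)..1,
      (LamF μ y z Dψ (Tseq k) (u * Tseq k) - LamF μ y z Dψ 0 (u * Tseq k)) / Tseq k)
    = (fun k => ∫ u in Set.Ioc (0:ℝ) 1,
        (LamF μ y z Dψ (Tseq k) (u * Tseq k) - LamF μ y z Dψ 0 (u * Tseq k)) / Tseq k)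
    from funext hconv, ← hconst]
  exact hmain

end Chain

/-- semi-symmetry of the second flat derivative: let
`ψ : P₂(ℝⁿ) → ℝ` have jointly continuous first and second flat derivatives
`δ_μψ(μ;y)` and `δ_{μμ}ψ(μ;y,z)` with the growth bound
`|δ_μψ|, |δ_{μμ}ψ| ≤ C_K(1+|y|²+|z|²)` on `{W₂(μ, δ₀) ≤ K}`.  Then
`δ_{μμ}ψ(μ; y, z) = δ_{μμ}ψ(μ; z, y) + δ_μψ(μ; y) − δ_μψ(μ; z)`. -/
theorem flat_deriv_semi_symmetry
    (ψ : Measure (EuclideanSpace ℝ (Fin n)) → ℝ)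
    (Dψ : Measure (EuclideanSpace ℝ (Fin n)) → EuclideanSpace ℝ (Fin n) → ℝ)
    (D2ψ : Measure (EuclideanSpace ℝ (Fin n)) → EuclideanSpace ℝ (Fin n) →
      EuclideanSpace ℝ (Fin n) → ℝ)
    (hD1 : IsFlatDeriv ψ Dψ)
    (hD2 : ∀ y, IsFlatDeriv (fun μ => Dψ μ y) (fun μ z => D2ψ μ y z))
    (hcont1 : JointContW2₁ Dψ)
    (hcont2 : JointContW2₂ D2ψ)
    (hgrowth : ∀ K > (0 : ℝ), ∃ C_K : ℝ, ∀ μ, MemP2 μ →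
      W2 μ (Measure.dirac 0) ≤ ENNReal.ofReal K →
      ∀ y z : EuclideanSpace ℝ (Fin n),
        |Dψ μ y| ≤ C_K * (1 + ‖y‖ ^ 2 + ‖z‖ ^ 2)
        ∧ |D2ψ μ y z| ≤ C_K * (1 + ‖y‖ ^ 2 + ‖z‖ ^ 2)) :
    ∀ μ, MemP2 μ → ∀ y z : EuclideanSpace ℝ (Fin n),
      D2ψ μ y z = D2ψ μ z y + Dψ μ y - Dψ μ z := by
  intro μ hμ y z
  have h1 := chain_limit (y := y) (z := z) hμ ψ Dψ D2ψ hD1 hD2 hcont1 hcont2 hgrowth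
  have h2 := chain_limit (y := z) (z := y) hμ ψ Dψ D2ψ hD1 hD2 hcont1 hcont2 hgrowth
  have h2' : Filter.Tendsto (fun k : ℕ =>
      (ψ (mmix μ y z (Tseq k) (Tseq k)) - ψ (mmix μ y z (Tseq k) 0)
        - ψ (mmix μ y z 0 (Tseq k)) + ψ μ) / (Tseq k * Tseq k))
      Filter.atTop (nhds (D2ψ μ y z + Dψ μ z)) := by
    refine h2.congr fun k => ?_
    simp only [mmix_swap]
    ring
  have huniq := tendsto_nhds_unique h1 h2'
  linarith
end
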